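/- arXiv:1605.05953 — 8 statements merged into one kernel-verified Lean document; each statement's English description precedes it below -/
import Mathlib

section
/- Let A be a finite-dimensional local symmetric F-algebra. Then soc(A) ∩ [A,A] = 0, where [A,A] is the F-span of all commutators ab − ba. -/
open Module

noncomputable def jrad (F A : Type*) [Field F] [Ring A] [Algebra F A] : Submodule F A :=
  Submodule.restrictScalars F (Ideal.jacobson (⊥ : Ideal A))

noncomputable def socl (F A : Type*) [Field F] [Ring A] [Algebra F A] : Submodule F A where
  carrier := {a | ∀ b ∈ Ideal.jacobson (⊥ : Ideal A), a * b = 0}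
  add_mem' := by
    intro a b ha hb c hc
    rw [add_mul, ha c hc, hb c hc, add_zero]
  zero_mem' := by intro c hc; exact zero_mul c
  smul_mem' := by
    intro r a ha c hc
    rw [Algebra.smul_def, mul_assoc, ha c hc, mul_zero]

noncomputable def commSpan (F A : Type*) [Field F] [Ring A] [Algebra F A] : Submodule F A :=
  Submodule.span F {x : A | ∃ a b : A, x = a * b - b * a}

/-- Let A be a finite-dimensional local symmetric F-algebra.
Then soc(A) ∩ [A,A] = 0. -/
theorem socle_inf_commutators_eq_bot
    (F A : Type*) [Field F] [Ring A] [Algebra F A] [FiniteDimensional F A]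
    (hloc : ∀ a : A, ∃ c : F, a - algebraMap F A c ∈ Ideal.jacobson (⊥ : Ideal A))
    (s : A →ₗ[F] F) (hs : ∀ a b : A, s (a * b) = s (b * a))
    (hker : ∀ I : Ideal A, (I : Set A) ⊆ {x | s x = 0} → I = ⊥) :
    socl F A ⊓ commSpan F A = ⊥ := by
  have hscomm : ∀ y ∈ commSpan F A, s y = 0 := by
    intro y hy
    have hle : commSpan F A ≤ LinearMap.ker s := by
      apply Submodule.span_le.2
      rintro z ⟨a, b, rfl⟩
      simp [LinearMap.mem_ker, map_sub, hs a b]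
    simpa using hle hy
  rw [eq_bot_iff]
  rintro x ⟨hx1, hx2⟩
  simp only [Submodule.mem_bot]
  have hsx : s x = 0 := hscomm x hx2
  have key : ∀ b : A, s (x * b) = 0 := by
    intro b
    obtain ⟨c, hc⟩ := hloc b
    have h0 : x * (b - algebraMap F A c) = 0 := hx1 _ hc
    have hxb : x * b = c • x := by
      have h1 : x * b - x * algebraMap F A c = 0 := by rw [← mul_sub]; exact h0
      have h2 : x * algebraMap F A c = c • x := by
        rw [Algebra.smul_def, Algebra.commutes]
      rw [sub_eq_zero] at h1
      rw [h1, h2]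
    rw [hxb, map_smul, hsx, smul_zero]
  have hsub : ((Ideal.span {x} : Ideal A) : Set A) ⊆ {y | s y = 0} := by
    intro y hy
    obtain ⟨b, rfl⟩ := Ideal.mem_span_singleton'.1 hy
    show s (b * x) = 0
    rw [hs b x]; exact key b
  have hbot := hker _ hsub
  have : x ∈ (Ideal.span {x} : Ideal A) := Ideal.mem_span_singleton_self x
  rw [hbot] at this
  exact this
end

section
/- Let A be a finite-dimensional local symmetric F-algebra and let n be the least natural number with J(A)^{n+1} = 0. Then J(A)^n = soc(A). -/
open Module

/-- In a finite-dimensional local symmetric F-algebra, if n is the least natural number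
with J(A)^(n+1) = 0, then J(A)^n = soc(A). -/
theorem jacobson_pow_eq_socle
    (F A : Type*) [Field F] [Ring A] [Algebra F A] [FiniteDimensional F A]
    (hloc : ∀ a : A, ∃ c : F, a - algebraMap F A c ∈ Ideal.jacobson (⊥ : Ideal A))
    (s : A →ₗ[F] F) (hs : ∀ a b : A, s (a * b) = s (b * a))
    (hker : ∀ I : Ideal A, (I : Set A) ⊆ {x | s x = 0} → I = ⊥)
    (n : ℕ) (hn : jrad F A ^ (n + 1) = ⊥)
    (hleast : ∀ m : ℕ, jrad F A ^ (m + 1) = ⊥ → n ≤ m) :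
    jrad F A ^ n = socl F A := by
  by_cases hA : Subsingleton A
  · ext x
    have hx0 : x = 0 := Subsingleton.elim x 0
    subst hx0
    simp
  rw [not_subsingleton_iff_nontrivial] at hA
  -- J is closed under right multiplication
  have Jright : ∀ b ∈ Ideal.jacobson (⊥ : Ideal A), ∀ r : A,
      b * r ∈ Ideal.jacobson (⊥ : Ideal A) := by
    intro b hb r
    exact (Ideal.jacobson (⊥ : Ideal A)).mul_mem_right r hb
  -- any left ideal whose generators satisfy s (r * x) = 0 for all r is trivial
  have hspan : ∀ (S : Set A), (∀ x ∈ S, ∀ r : A, s (r * x) = 0) → Ideal.span S = ⊥ := by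
    intro S hS
    apply hker
    intro x hx
    have key : ∀ x ∈ Ideal.span S, ∀ r : A, s (r * x) = 0 := by
      intro x hx
      refine Submodule.span_induction (p := fun x _ => ∀ r : A, s (r * x) = 0)
        ?_ ?_ ?_ ?_ hx
      · intro z hz r; exact hS z hz r
      · intro r; simp
      · intro y z _ _ hy hz r
        rw [mul_add, map_add, hy r, hz r, add_zero]
      · intro a y _ hy r
        have : r * (a • y) = (r * a) * y := by
          rw [smul_eq_mul, mul_assoc]
        rw [this, hy (r * a)]
    have := key x hx 1
    rwa [one_mul] at this
  -- the symmetric bilinear form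
  set B : LinearMap.BilinForm F A := LinearMap.mk₂ F (fun a b => s (a * b))
    (fun a a' b => by simp [add_mul])
    (fun c a b => by simp [smul_mul_assoc])
    (fun a b b' => by simp [mul_add])
    (fun c a b => by simp [mul_smul_comm]) with hB
  have hBapp : ∀ a b : A, B a b = s (a * b) := fun a b => rfl
  have hBsymm : ∀ a b : A, B a b = B b a := by
    intro a b; rw [hBapp, hBapp, hs]
  have hrefl : B.IsRefl := fun a b h => by rw [hBsymm]; exact h
  have hnd : B.Nondegenerate := by
    refine (LinearMap.IsRefl.nondegenerate_iff_separatingLeft hrefl).mpr ?_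
    intro x hx
    have h1 : Ideal.span {x} = ⊥ := by
      apply hspan
      intro z hz r
      rw [Set.mem_singleton_iff] at hz
      subst hz
      rw [hs, ← hBapp]
      exact hx r
    have : x ∈ Ideal.span ({x} : Set A) := Ideal.subset_span rfl
    rwa [h1, Ideal.mem_bot] at this
  -- socl is the orthogonal complement of J
  have hsocl : socl F A = B.orthogonal (jrad F A) := by
    apply le_antisymm
    · intro a ha
      intro b hb
      show B b a = 0
      rw [hBsymm, hBapp, ha b hb, map_zero]
    · intro a ha
      intro b hb
      have h1 : Ideal.span {z : A | ∃ c ∈ Ideal.jacobson (⊥ : Ideal A), z = a * c} = ⊥ := by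
        apply hspan
        rintro z ⟨c, hc, rfl⟩ r
        have h2 : s (r * (a * c)) = s ((c * r) * a) := by
          rw [← mul_assoc, hs, ← mul_assoc]
        rw [h2, ← hBapp]
        exact ha (c * r) (Jright c hc r)
      have : a * b ∈ Ideal.span {z : A | ∃ c ∈ Ideal.jacobson (⊥ : Ideal A), z = a * c} :=
        Ideal.subset_span ⟨b, hb, rfl⟩
      rwa [h1, Ideal.mem_bot] at this
  -- 1 is not in J
  have hone : (1 : A) ∉ jrad F A := by
    intro h1
    have hk : ∀ k : ℕ, (1 : A) ∈ jrad F A ^ k := by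
      intro k
      induction k with
      | zero => rw [pow_zero]; exact Submodule.one_le.mp le_rfl
      | succ k ih =>
        rw [pow_succ]
        have := Submodule.mul_mem_mul ih h1
        rwa [one_mul] at this
    have := hk (n + 1)
    rw [hn, Submodule.mem_bot] at this
    exact one_ne_zero this
  -- dimensions
  have hsup : jrad F A ⊔ (F ∙ (1 : A)) = ⊤ := by
    rw [eq_top_iff]
    intro a _
    obtain ⟨c, hc⟩ := hloc a
    have : a = (a - algebraMap F A c) + c • (1 : A) := by
      rw [Algebra.algebraMap_eq_smul_one] at *
      abel
    rw [this]
    exact Submodule.add_mem_sup hc (Submodule.smul_mem _ c (Submodule.mem_span_singleton_self _))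
  have hinf : jrad F A ⊓ (F ∙ (1 : A)) = ⊥ := by
    rw [eq_bot_iff]
    rintro x ⟨hxJ, hx1⟩
    obtain ⟨c, rfl⟩ := Submodule.mem_span_singleton.mp hx1
    rcases eq_or_ne c 0 with rfl | hc
    · simp
    · exfalso
      apply hone
      have := Submodule.smul_mem (jrad F A) c⁻¹ hxJ
      rwa [smul_smul, inv_mul_cancel₀ hc, one_smul] at this
  have hdim1 : finrank F (F ∙ (1 : A)) = 1 := finrank_span_singleton one_ne_zero
  have hdimsum := Submodule.finrank_sup_add_finrank_inf_eq (jrad F A) (F ∙ (1 : A))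
  rw [hsup, hinf, finrank_bot, hdim1, finrank_top, add_zero] at hdimsum
  have horthdim : finrank F (B.orthogonal (jrad F A)) = 1 := by
    rw [LinearMap.BilinForm.finrank_orthogonal hnd (jrad F A)]
    omega
  -- J^n ≤ socl
  have hle : jrad F A ^ n ≤ socl F A := by
    intro x hx
    intro b hb
    have hbJ : b ∈ jrad F A := hb
    have : x * b ∈ jrad F A ^ n * jrad F A := Submodule.mul_mem_mul hx hbJ
    rw [← pow_succ, hn, Submodule.mem_bot] at this
    exact this
  -- J^n ≠ ⊥
  have hne : jrad F A ^ n ≠ ⊥ := by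
    cases n with
    | zero =>
      intro h
      rw [pow_zero] at h
      have : (1 : A) ∈ (1 : Submodule F A) := Submodule.one_le.mp le_rfl
      rw [h, Submodule.mem_bot] at this
      exact one_ne_zero this
    | succ m =>
      intro h
      have := hleast m h
      omega
  have hpos : 0 < finrank F ↥(jrad F A ^ n) := by
    by_contra h
    push_neg at h
    rw [Nat.le_zero] at h
    exact hne (Submodule.finrank_eq_zero.mp h)
  have hsocdim : finrank F (socl F A) = 1 := by rw [hsocl]; exact horthdim
  exact Submodule.eq_of_le_of_finrank_le hle (by omega)
end

section
/- Let A be an F-algebra, I a two-sided ideal in A, and n a natural number. Suppose I^n = F-span{x_{i1}⋯x_{in} : i = 1,…,d} + I^{n+1} for elements x_{ij} ∈ I. Then I^{n+1} = F-span{x_{j1}·x_{i1}⋯x_{in} : i,j = 1,…,d} + I^{n+2}. -/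
open Module

private lemma list_prod_mem_pow {F A : Type*} [Field F] [Ring A] [Algebra F A]
    (I : Submodule F A) :
    ∀ l : List A, (∀ y ∈ l, y ∈ I) → l.prod ∈ I ^ l.length := by
  intro l
  induction l with
  | nil =>
    intro _
    rw [List.prod_nil, List.length_nil, pow_zero]
    exact Submodule.one_le.mp le_rfl
  | cons a t ih =>
    intro h
    rw [List.prod_cons, List.length_cons, pow_succ']
    exact Submodule.mul_mem_mul (h a (by simp)) (ih fun y hy => h y (by simp [hy]))

/-- Külshammer's Lemma E: if I^n is spanned modulo I^(n+1) by the products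
x_{i1}⋯x_{in}, then I^(n+1) is spanned modulo I^(n+2) by the products
x_{j1}·x_{i1}⋯x_{in}. -/
theorem ideal_pow_succ_span
    (F A : Type*) [Field F] [Ring A] [Algebra F A]
    (I : Submodule F A)
    (hI : ∀ (a x : A), x ∈ I → a * x ∈ I ∧ x * a ∈ I)
    (d n : ℕ) (hn : 0 < n) (x : Fin d → Fin n → A) (hx : ∀ i j, x i j ∈ I)
    (hspan : I ^ n =
      Submodule.span F {y : A | ∃ i : Fin d, y = (List.ofFn (x i)).prod} ⊔ I ^ (n + 1)) :
    I ^ (n + 1) =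
      Submodule.span F
        {y : A | ∃ i j : Fin d, y = x j ⟨0, hn⟩ * (List.ofFn (x i)).prod} ⊔ I ^ (n + 2) := by
  obtain ⟨m, rfl⟩ : ∃ m, n = m + 1 := ⟨n - 1, (Nat.succ_pred_eq_of_pos hn).symm⟩
  set S : Set A := {y : A | ∃ i : Fin d, y = (List.ofFn (x i)).prod} with hS
  set T : Set A := {y : A | ∃ i j : Fin d, y = x j ⟨0, hn⟩ * (List.ofFn (x i)).prod} with hT
  have hII : I * I ≤ I := Submodule.mul_le.2 fun a ha b hb => (hI a b hb).1
  have hIpow : ∀ k : ℕ, I * I ^ (k + 1) ≤ I ^ (k + 1) := by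
    intro k
    induction k with
    | zero => simpa [pow_one] using hII
    | succ k ih =>
      calc I * I ^ (k + 2) = (I * I ^ (k + 1)) * I := by rw [pow_succ, ← mul_assoc]
        _ ≤ I ^ (k + 1) * I := mul_le_mul' ih le_rfl
        _ = I ^ (k + 2) := (pow_succ I (k + 1)).symm
  have hp : ∀ i : Fin d, (List.ofFn (x i)).prod ∈ I ^ (m + 1) := by
    intro i
    have h1 : (List.ofFn (x i)).prod ∈ I ^ (List.ofFn (x i)).length :=
      list_prod_mem_pow I _ (by
        intro y hy
        obtain ⟨j, rfl⟩ := List.mem_ofFn.1 hy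
        exact hx i j)
    simpa using h1
  have hzero : (⟨0, hn⟩ : Fin (m + 1)) = 0 := rfl
  apply le_antisymm
  · -- forward inclusion
    have h1 : I ^ (m + 1 + 1) = I ^ (m + 1) * I := pow_succ I (m + 1)
    rw [h1, hspan, Submodule.sup_mul]
    apply sup_le
    · rw [Submodule.mul_le]
      intro p hp' a ha
      induction hp' using Submodule.span_induction with
      | mem p hmem =>
        obtain ⟨j, rfl⟩ := hmem
        -- decompose the product
        have htail0 : (List.ofFn fun i : Fin m => x j i.succ).prod ∈ I ^ m := by
          have := list_prod_mem_pow I (List.ofFn fun i : Fin m => x j i.succ) (by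
            intro y hy
            obtain ⟨k, rfl⟩ := List.mem_ofFn.1 hy
            exact hx j k.succ)
          simpa using this
        have htail : (List.ofFn fun i : Fin m => x j i.succ).prod * a ∈ I ^ (m + 1) := by
          have h2 := Submodule.mul_mem_mul htail0 ha
          rwa [← pow_succ] at h2
        rw [hspan] at htail
        obtain ⟨u, hu, v, hv, huv⟩ := Submodule.mem_sup.1 htail
        have hleft : ∀ w ∈ Submodule.span F S, x j ⟨0, hn⟩ * w ∈ Submodule.span F T := by
          intro w hw
          induction hw using Submodule.span_induction with
          | mem w hmem =>
            obtain ⟨i, rfl⟩ := hmem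
            exact Submodule.subset_span ⟨i, j, rfl⟩
          | zero => rw [mul_zero]; exact Submodule.zero_mem _
          | add w₁ w₂ _ _ g1 g2 => rw [mul_add]; exact Submodule.add_mem _ g1 g2
          | smul c w _ g1 => rw [mul_smul_comm]; exact Submodule.smul_mem _ c g1
        have hrw : (List.ofFn (x j)).prod * a = x j ⟨0, hn⟩ * u + x j ⟨0, hn⟩ * v := by
          rw [List.ofFn_succ, List.prod_cons, hzero, mul_assoc, ← huv, mul_add]
        rw [hrw]
        apply Submodule.add_mem
        · exact Submodule.mem_sup_left (hleft u hu)
        · apply Submodule.mem_sup_right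
          have h3 : I ^ (m + 1 + 2) = I * I ^ (m + 1 + 1) := pow_succ' I (m + 1 + 1)
          rw [h3]
          exact Submodule.mul_mem_mul (hx j ⟨0, hn⟩) hv
      | zero => rw [zero_mul]; exact Submodule.zero_mem _
      | add p q _ _ h1 h2 => rw [add_mul]; exact Submodule.add_mem _ h1 h2
      | smul c p _ h1 => rw [smul_mul_assoc]; exact Submodule.smul_mem _ c h1
    · rw [← pow_succ]
      exact le_sup_right
  · apply sup_le
    · rw [Submodule.span_le]
      rintro y ⟨i, j, rfl⟩
      have h3 : I ^ (m + 1 + 1) = I * I ^ (m + 1) := pow_succ' I (m + 1)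
      rw [SetLike.mem_coe, h3]
      exact Submodule.mul_mem_mul (hx j _) (hp i)
    · calc I ^ (m + 1 + 2) = I * I ^ (m + 1 + 1) := pow_succ' I (m + 1 + 1)
        _ ≤ I ^ (m + 1 + 1) := hIpow (m + 1)
end

section
/- Let A be a finite-dimensional local symmetric F-algebra and let n ∈ ℕ be such that dim_F( J(A)^n / J(A)^{n+1} ) = 1. Then J(A)^{n-1} ⊆ Z(A). -/
open Module

namespace KulG

variable {F A : Type*} [Field F] [Ring A] [Algebra F A]

lemma mem_jrad {x : A} : x ∈ jrad F A ↔ x ∈ Ideal.jacobson (⊥ : Ideal A) := Iff.rfl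

lemma jac_mul_right' {x : A} (hx : x ∈ Ideal.jacobson (⊥ : Ideal A)) (a : A) :
    x * a ∈ Ideal.jacobson (⊥ : Ideal A) :=
  Ideal.mul_mem_right a _ hx

lemma jrad_mul_right {x : A} (hx : x ∈ jrad F A) (a : A) : x * a ∈ jrad F A :=
  jac_mul_right' hx a

lemma jrad_mul_left {x : A} (hx : x ∈ jrad F A) (a : A) : a * x ∈ jrad F A := by
  simpa [smul_eq_mul, mem_jrad] using (Ideal.jacobson (⊥ : Ideal A)).smul_mem a hx

lemma Jcast {p q : ℕ} (h : p = q) {x : A} (hx : x ∈ (jrad F A)^p) : x ∈ (jrad F A)^q := h ▸ hx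

lemma memJ1 {x : A} (h : x ∈ jrad F A) : x ∈ (jrad F A)^1 := by
  rw [pow_one]; exact h

lemma mem_pow_mul {p q : ℕ} {x y : A} (hx : x ∈ (jrad F A)^p) (hy : y ∈ (jrad F A)^q) :
    x * y ∈ (jrad F A)^(p+q) := by
  rw [pow_add]; exact Submodule.mul_mem_mul hx hy

lemma pow_mul_right {k : ℕ} {x y : A} (hx : x ∈ (jrad F A)^(k+1)) (hy : y ∈ jrad F A) :
    x * y ∈ (jrad F A)^(k+1) := by
  rw [pow_succ] at hx ⊢
  refine Submodule.mul_induction_on hx (fun a ha b hb => ?_) (fun a b ha hb => ?_)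
  · rw [mul_assoc]
    exact Submodule.mul_mem_mul ha (jrad_mul_right hb y)
  · rw [add_mul]; exact add_mem ha hb

lemma pow_le {k l : ℕ} (hk : 1 ≤ k) (hkl : k ≤ l) : (jrad F A)^l ≤ (jrad F A)^k := by
  obtain ⟨d, rfl⟩ : ∃ d, l = k + d := ⟨l - k, by omega⟩
  clear hkl
  induction d with
  | zero => exact le_rfl
  | succ d ih =>
    rw [show k + (d+1) = (k+d)+1 by omega, pow_succ]
    refine Submodule.mul_le.mpr fun x hx y hy => ?_
    obtain ⟨k', rfl⟩ : ∃ k', k = k' + 1 := ⟨k - 1, by omega⟩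
    exact pow_mul_right (ih hx) hy

lemma pow_eq_bot {N m : ℕ} (hN : (jrad F A)^N = ⊥) (h : N ≤ m) : (jrad F A)^m = ⊥ := by
  obtain ⟨d, rfl⟩ : ∃ d, m = N + d := ⟨m - N, by omega⟩
  rw [pow_add, hN, Submodule.bot_mul]


/-- In a noncommutative ring, `1 - c` is a unit when `c` is in the Jacobson radical. -/
lemma isUnit_one_sub_jac {c : A} (hc : c ∈ Ideal.jacobson (⊥ : Ideal A)) : IsUnit (1 - c) := by
  have h1 : (1 - c) - 1 ∈ Ideal.jacobson (⊥ : Ideal A) := by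
    simpa using (Ideal.jacobson (⊥ : Ideal A)).neg_mem hc
  obtain ⟨s, hs⟩ := Ideal.exists_mul_sub_mem_of_sub_one_mem_jacobson _ h1
  rw [Ideal.mem_bot, sub_eq_zero] at hs
  have hs1 : s - 1 ∈ Ideal.jacobson (⊥ : Ideal A) := by
    have hmem : s * ((1 - c) - 1) ∈ Ideal.jacobson (⊥ : Ideal A) :=
      Ideal.mul_mem_left _ s h1
    have heq : s * ((1 - c) - 1) = 1 - s := by rw [mul_sub, hs, mul_one]
    rw [heq] at hmem
    simpa using (Ideal.jacobson (⊥ : Ideal A)).neg_mem hmem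
  obtain ⟨t, ht⟩ := Ideal.exists_mul_sub_mem_of_sub_one_mem_jacobson s hs1
  rw [Ideal.mem_bot, sub_eq_zero] at ht
  have hteq : t = 1 - c := by
    calc t = t * (s * (1 - c)) := by rw [hs, mul_one]
    _ = (t * s) * (1 - c) := by rw [mul_assoc]
    _ = 1 - c := by rw [ht, one_mul]
  exact ⟨⟨1 - c, s, by rw [← hteq]; exact ht, hs⟩, rfl⟩

lemma mem_jac_mul_span_singleton {a y : A}
    (hy : y ∈ (Ideal.jacobson (⊥ : Ideal A)) * Submodule.span A {a}) :
    ∃ c ∈ Ideal.jacobson (⊥ : Ideal A), c * a = y := by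
  refine Submodule.mul_induction_on hy ?_ ?_
  · intro u hu v hv
    obtain ⟨r, rfl⟩ := Submodule.mem_span_singleton.mp hv
    rw [smul_eq_mul, ← mul_assoc]
    exact ⟨u * r, jac_mul_right' hu r, rfl⟩
  · rintro x y ⟨c₁, hc₁, rfl⟩ ⟨c₂, hc₂, rfl⟩
    exact ⟨c₁ + c₂, add_mem hc₁ hc₂, by rw [add_mul]⟩

/-- Noncommutative Nakayama, for spans of finite sets. -/
lemma span_eq_bot_of_le_mul (S : Finset A)
    (hle : Submodule.span A (S : Set A) ≤
      (Ideal.jacobson (⊥ : Ideal A)) * Submodule.span A (S : Set A)) :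
    Submodule.span A (S : Set A) = ⊥ := by
  classical
  induction S using Finset.induction_on with
  | empty => simp
  | @insert a S ha ih =>
    have hins : (↑(insert a S) : Set A) = insert a (S : Set A) := by simp
    have key : Submodule.span A (↑(insert a S) : Set A) = Submodule.span A (S : Set A) := by
      refine le_antisymm ?_ (Submodule.span_mono (by simp))
      rw [hins, Submodule.span_insert]
      have haJ : a ∈ (Ideal.jacobson (⊥ : Ideal A)) * Submodule.span A (S : Set A) := by
        have haN : a ∈ Submodule.span A (↑(insert a S) : Set A) :=
          Submodule.subset_span (by simp)
        have hmem2 := hle haN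
        rw [hins, Submodule.span_insert, Submodule.mul_sup] at hmem2
        obtain ⟨y, hy, z, hz, hyz⟩ := Submodule.mem_sup.mp hmem2
        obtain ⟨cc, hcc, rfl⟩ := mem_jac_mul_span_singleton hy
        have hz' : z = a - cc * a := by
          rw [eq_sub_iff_add_eq, add_comm]
          exact hyz
        have hsub : (1 - cc) * a = z := by rw [sub_mul, one_mul, hz']
        obtain ⟨u, hu⟩ := isUnit_one_sub_jac (A := A) hcc
        have haz : a = (↑u⁻¹ : A) * z := by
          rw [← hsub, ← mul_assoc, ← hu, Units.inv_mul, one_mul]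
        rw [haz]
        rw [show (↑u⁻¹ : A) * z = (↑u⁻¹ : A) • z from (smul_eq_mul ..).symm]
        exact Submodule.smul_mem _ _ hz
      have hJS : (Ideal.jacobson (⊥ : Ideal A)) * Submodule.span A (S : Set A) ≤
          Submodule.span A (S : Set A) := by
        refine Submodule.mul_le.mpr fun u hu v hv => ?_
        rw [show u * v = u • v from (smul_eq_mul ..).symm]
        exact Submodule.smul_mem _ _ hv
      have haS : a ∈ Submodule.span A (S : Set A) := hJS haJ
      exact sup_le ((Submodule.span_singleton_le_iff_mem _ _).mpr haS) le_rfl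
    rw [key]
    apply ih
    calc Submodule.span A (S : Set A)
        = Submodule.span A (↑(insert a S) : Set A) := key.symm
    _ ≤ (Ideal.jacobson (⊥ : Ideal A)) * Submodule.span A (↑(insert a S) : Set A) := hle
    _ = (Ideal.jacobson (⊥ : Ideal A)) * Submodule.span A (S : Set A) := by rw [key]


set_option maxHeartbeats 800000 in
/-- nilpotency of the radical -/
lemma exists_pow_bot [FiniteDimensional F A] : ∃ N, (jrad F A)^N = ⊥ := by
  have hstab : ∃ m, (jrad F A)^(m+1) = (jrad F A)^(m+2) := by
    by_contra hcon
    push_neg at hcon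
    have hlt : ∀ m, (jrad F A)^(m+1+1) < (jrad F A)^(m+1) := by
      intro m
      refine lt_of_le_of_ne ?_ (Ne.symm (hcon m))
      rw [pow_succ]
      refine Submodule.mul_le.mpr fun x hx y hy => ?_
      rw [pow_succ] at hx ⊢
      refine Submodule.mul_induction_on hx (fun a ha b hb => ?_) (fun a b ha hb => ?_)
      · rw [mul_assoc]
        exact Submodule.mul_mem_mul ha (jac_mul_right' hb y)
      · rw [add_mul]; exact add_mem ha hb
    have hrank : ∀ m, finrank F (↥((jrad F A)^(m+1+1))) < finrank F (↥((jrad F A)^(m+1))) :=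
      fun m => Submodule.finrank_lt_finrank_of_lt (hlt m)
    have hsum : ∀ m, finrank F (↥((jrad F A)^(m+1))) + m ≤ finrank F (↥((jrad F A)^(0+1))) := by
      intro m
      induction m with
      | zero => omega
      | succ m ih =>
        have := hrank m
        omega
    have := hsum (finrank F (↥((jrad F A)^(0+1))) + 1)
    omega
  obtain ⟨m, hm⟩ := hstab
  set P : Submodule F A := (jrad F A)^(m+1) with hP
  have hPFG : P.FG := IsNoetherian.noetherian P
  obtain ⟨S, hS⟩ := hPFG
  have hSP : (S : Set A) ⊆ (P : Set A) := by rw [← hS]; exact Submodule.subset_span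
  have hPin : ∀ x ∈ P, x ∈ Submodule.span A (S : Set A) := by
    intro x hx
    rw [← hS] at hx
    have hle2 : Submodule.span F (S : Set A) ≤
        Submodule.restrictScalars F (Submodule.span A (S : Set A)) := by
      rw [Submodule.span_le]; intro y hy; exact Submodule.subset_span hy
    exact hle2 hx
  have hleft : ∀ (a : A), ∀ x ∈ P, a * x ∈ P := by
    intro a x hx
    rw [hP, pow_succ'] at hx ⊢
    refine Submodule.mul_induction_on hx (fun u hu v hv => ?_) (fun u v hu hv => ?_)
    · rw [← mul_assoc]
      exact Submodule.mul_mem_mul (jrad_mul_left hu a) hv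
    · rw [mul_add]; exact add_mem hu hv
  have hin : ∀ x ∈ Submodule.span A (S : Set A), x ∈ P := by
    intro x hx
    refine Submodule.span_induction (fun y hy => hSP hy) P.zero_mem
      (fun y z _ _ hy hz => P.add_mem hy hz)
      (fun a y _ hy => by
        have := hleft a y hy
        simpa [smul_eq_mul] using this) hx
  have hle : Submodule.span A (S : Set A) ≤
      (Ideal.jacobson (⊥ : Ideal A)) * Submodule.span A (S : Set A) := by
    intro x hx
    have hxP : x ∈ P := hin x hx
    have hx2 : x ∈ (jrad F A)^(m+2) := by rw [← hm]; exact hxP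
    rw [pow_succ'] at hx2
    refine Submodule.mul_induction_on hx2 (fun u hu v hv => ?_) (fun u v hu hv => ?_)
    · exact Submodule.mul_mem_mul hu (hPin v hv)
    · exact add_mem hu hv
  have hbot := span_eq_bot_of_le_mul S hle
  refine ⟨m+1, ?_⟩
  rw [eq_bot_iff]
  intro x hx
  have hx2 := hPin x hx
  rw [hbot] at hx2
  simpa using hx2

section Form

variable (s : A →ₗ[F] F)

lemma faithful (hs : ∀ a b : A, s (a * b) = s (b * a))
    (hker : ∀ I : Ideal A, (I : Set A) ⊆ {x | s x = 0} → I = ⊥)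
    {x : A} (h : ∀ a : A, s (a * x) = 0) : x = 0 := by
  have hsub : ((Ideal.span {x} : Ideal A) : Set A) ⊆ {y | s y = 0} := by
    intro y hy
    obtain ⟨a, rfl⟩ := Submodule.mem_span_singleton.mp hy
    have hax : a • x = a * x := smul_eq_mul ..
    simp only [Set.mem_setOf_eq, hax]
    exact h a
  have hbot := hker _ hsub
  have hx : x ∈ Ideal.span ({x} : Set A) := Ideal.subset_span rfl
  rw [hbot] at hx
  simpa using hx

lemma soc_faithful (hs : ∀ a b : A, s (a * b) = s (b * a))
    (hker : ∀ I : Ideal A, (I : Set A) ⊆ {x | s x = 0} → I = ⊥)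
    (hloc : ∀ a : A, ∃ c : F, a - algebraMap F A c ∈ Ideal.jacobson (⊥ : Ideal A))
    {x : A} (hkill : ∀ j ∈ jrad F A, j * x = 0) (hsx : s x = 0) : x = 0 := by
  refine faithful s hs hker ?_
  intro a
  obtain ⟨c, hc⟩ := hloc a
  have hdecomp : a * x = (a - algebraMap F A c) * x + c • x := by
    rw [sub_mul, Algebra.smul_def]
    abel
  rw [hdecomp, hkill _ hc, zero_add, map_smul, hsx, smul_zero]

lemma s_anti13 (hs : ∀ a b : A, s (a * b) = s (b * a)) (a b c : A) : s (a * (b * c - c * b)) = - s (c * (b * a - a * b)) := by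
  have r1 : s (a * (b * c)) = s (c * (a * b)) := by
    rw [← mul_assoc, hs (a*b) c]
  have r2 : s (a * (c * b)) = s (c * (b * a)) := by
    rw [← mul_assoc, hs (a*c) b, ← mul_assoc, hs (b*a) c]
  rw [mul_sub, mul_sub, map_sub, map_sub, r1, r2]
  ring

lemma s_diag (hs : ∀ a b : A, s (a * b) = s (b * a)) (u z : A) : s (u * (z * u - u * z)) = 0 := by
  have r1 : s (u * (z * u)) = s (u * (u * z)) := by
    rw [hs u (z*u), mul_assoc, hs z (u*u), mul_assoc]
  rw [mul_sub, map_sub, r1, sub_self]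

lemma s_central_kill (hs : ∀ a b : A, s (a * b) = s (b * a)) {c : A} (hc : ∀ b : A, b * c = c * b) (x y : A) :
    s (c * (x * y - y * x)) = 0 := by
  have h2 : c * (y * x) = y * (c * x) := by
    rw [← mul_assoc, ← hc y, mul_assoc]
  rw [mul_sub, map_sub, h2, hs y (c*x), ← mul_assoc c x y, sub_self]

lemma s_cocycle (hs : ∀ a b : A, s (a * b) = s (b * a)) (u z w j : A) :
    s (u * ((z * w) * j - j * (z * w))) =
      s ((u * z) * (w * j - j * w)) + s ((w * u) * (z * j - j * z)) := by
  have h1 : s (u * (j * (z * w))) = s (w * (u * (j * z))) := by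
    rw [← hs (u * (j * z)) w]
    simp only [mul_assoc]
  have h2 : s (u * (z * (j * w))) = s (w * (u * (z * j))) := by
    rw [← hs (u * (z * j)) w]
    simp only [mul_assoc]
  simp only [mul_sub, map_sub, mul_assoc]
  rw [h1, h2]
  ring

end Form

lemma decomp {m : ℕ} {t x : A}
    (hlay : (jrad F A)^m ≤ Submodule.span F {t} ⊔ (jrad F A)^(m+1))
    (hx : x ∈ (jrad F A)^m) : ∃ c : F, ∃ h ∈ (jrad F A)^(m+1), x = c • t + h := by
  obtain ⟨y, hy, h, hh, hxyh⟩ := Submodule.mem_sup.mp (hlay hx)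
  obtain ⟨c, rfl⟩ := Submodule.mem_span_singleton.mp hy
  exact ⟨c, h, hh, hxyh.symm⟩

lemma layer_step (hnil : ∃ N, (jrad F A)^N = ⊥) {m' : ℕ} {t : A}
    (ht : t ∈ (jrad F A)^(m'+1))
    (hlay : (jrad F A)^(m'+1) ≤ Submodule.span F {t} ⊔ (jrad F A)^(m'+2)) :
    ∃ t' ∈ (jrad F A)^(m'+2),
      (jrad F A)^(m'+2) ≤ Submodule.span F {t'} ⊔ (jrad F A)^(m'+3) := by
  by_cases hbot : (jrad F A)^(m'+2) = ⊥
  · exact ⟨0, Submodule.zero_mem _, by rw [hbot]; exact bot_le⟩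
  · have hchain : ¬ ((jrad F A)^(m'+1) ≤ (jrad F A)^(m'+2)) := by
      intro hle
      apply hbot
      obtain ⟨N, hN⟩ := hnil
      have grow : ∀ i, (jrad F A)^(m'+2) ≤ (jrad F A)^(m'+2+i) := by
        intro i
        induction i with
        | zero => exact le_rfl
        | succ i ih =>
          refine ih.trans ?_
          have h1 : (jrad F A)^(m'+2+i) = (jrad F A)^(m'+1) * (jrad F A)^(i+1) := by
            rw [← pow_add]; congr 1; omega
          have h3 : (jrad F A)^(m'+2) * (jrad F A)^(i+1) = (jrad F A)^(m'+2+(i+1)) := by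
            rw [← pow_add]
          rw [h1, ← h3]
          exact mul_le_mul' hle le_rfl
      have hfin : (jrad F A)^(m'+2+N) = ⊥ := pow_eq_bot hN (by omega)
      rw [eq_bot_iff]
      exact le_trans (grow N) (le_of_eq hfin)
    have hBL : ∃ v ∈ jrad F A, ∃ z ∈ (jrad F A)^m', ¬ (v * z ∈ (jrad F A)^(m'+2)) := by
      by_contra hcon
      push_neg at hcon
      apply hchain
      have he : (jrad F A)^(m'+1) = (jrad F A) * (jrad F A)^m' := by rw [← pow_succ']
      rw [he]
      exact Submodule.mul_le.mpr hcon
    obtain ⟨v₀, hv₀, z₀, hz₀, hvz₀⟩ := hBL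
    have hBR : ∃ z ∈ (jrad F A)^m', ∃ v ∈ jrad F A, ¬ (z * v ∈ (jrad F A)^(m'+2)) := by
      by_contra hcon
      push_neg at hcon
      apply hchain
      have he : (jrad F A)^(m'+1) = (jrad F A)^m' * (jrad F A) := by rw [← pow_succ]
      rw [he]
      exact Submodule.mul_le.mpr hcon
    obtain ⟨z₁, hz₁, v₁, hv₁, hzv₁⟩ := hBR
    obtain ⟨c₀, h₀, hh₀, he₀⟩ := decomp hlay
      (Jcast (show 1 + m' = m'+1 by omega) (mem_pow_mul (memJ1 hv₀) hz₀))
    have hc₀ : c₀ ≠ 0 := by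
      intro h
      apply hvz₀
      rw [he₀, h, zero_smul, zero_add]
      exact hh₀
    obtain ⟨c₁, h₁, hh₁, he₁⟩ := decomp hlay
      (Jcast (show m' + 1 = m'+1 by omega) (mem_pow_mul hz₁ (memJ1 hv₁)))
    have hc₁ : c₁ ≠ 0 := by
      intro h
      apply hzv₁
      rw [he₁, h, zero_smul, zero_add]
      exact hh₁
    have core : ∀ v ∈ jrad F A, ∀ z ∈ (jrad F A)^m', ∀ v'' ∈ jrad F A,
        ∀ (a b : F) (p q : A), p ∈ (jrad F A)^(m'+2) → q ∈ (jrad F A)^(m'+2) →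
        v * z = a • t + p → z * v'' = b • t + q →
        a • (t * v'') - b • (v * t) ∈ (jrad F A)^(m'+3) := by
      intro v hv z hz v'' hv'' a b p q hp hq e1 e2
      have e1' : a • t = v * z - p := eq_sub_of_add_eq e1.symm
      have e2' : b • t = z * v'' - q := eq_sub_of_add_eq e2.symm
      have key : a • (t * v'') - b • (v * t) = v * q - p * v'' := by
        have l1 : a • (t * v'') = (a • t) * v'' := (smul_mul_assoc a t v'').symm
        have l2 : b • (v * t) = v * (b • t) := (mul_smul_comm b v t).symm
        rw [l1, l2, e1', e2', sub_mul, mul_sub, mul_assoc]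
        abel
      rw [key]
      refine sub_mem ?_ ?_
      · exact Jcast (show 1+(m'+2) = m'+3 by omega)
          (mem_pow_mul (memJ1 hv) hq)
      · exact Jcast (show (m'+2)+1 = m'+3 by omega)
          (mem_pow_mul hp (memJ1 hv''))
    have step4 : ∀ v'' ∈ jrad F A,
        t * v'' ∈ Submodule.span F {v₀ * t} ⊔ (jrad F A)^(m'+3) := by
      intro v'' hv''
      obtain ⟨b, q, hq, he⟩ := decomp hlay
        (Jcast (show m' + 1 = m' + 1 by omega) (mem_pow_mul hz₀ (memJ1 hv'')))
      have hc := core v₀ hv₀ z₀ hz₀ v'' hv'' c₀ b h₀ q hh₀ hq he₀ he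
      have heq : t * v'' = (c₀⁻¹ * b) • (v₀ * t)
          + c₀⁻¹ • (c₀ • (t * v'') - b • (v₀ * t)) := by
        rw [smul_sub, smul_smul, smul_smul, inv_mul_cancel₀ hc₀, one_smul]
        abel
      rw [heq]
      exact Submodule.add_mem _
        (Submodule.mem_sup_left (Submodule.smul_mem _ _ (Submodule.mem_span_singleton_self _)))
        (Submodule.mem_sup_right (Submodule.smul_mem _ _ hc))
    have step5 : ∀ v ∈ jrad F A,
        v * t ∈ Submodule.span F {v₀ * t} ⊔ (jrad F A)^(m'+3) := by
      intro v hv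
      obtain ⟨a, p, hp, he⟩ := decomp hlay
        (Jcast (show 1 + m' = m' + 1 by omega) (mem_pow_mul (memJ1 hv) hz₁))
      have hc := core v hv z₁ hz₁ v₁ hv₁ a c₁ p h₁ hp hh₁ he he₁
      have hv₁t := step4 v₁ hv₁
      have heq : v * t = (c₁⁻¹ * a) • (t * v₁)
          - c₁⁻¹ • (a • (t * v₁) - c₁ • (v * t)) := by
        rw [smul_sub, smul_smul, smul_smul, inv_mul_cancel₀ hc₁, one_smul]
        abel
      rw [heq]
      refine Submodule.sub_mem _ ?_ (Submodule.mem_sup_right (Submodule.smul_mem _ _ hc))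
      exact Submodule.smul_mem _ _ hv₁t
    refine ⟨v₀ * t, Jcast (show 1+(m'+1) = m'+2 by omega)
      (mem_pow_mul (memJ1 hv₀) ht), ?_⟩
    have he : (jrad F A)^(m'+2) = (jrad F A)^(m'+1) * (jrad F A) := by rw [← pow_succ]
    rw [he]
    refine Submodule.mul_le.mpr fun x hx y hy => ?_
    obtain ⟨cx, hx2, hhx, hex⟩ := decomp hlay hx
    rw [hex, add_mul, smul_mul_assoc]
    refine Submodule.add_mem _ (Submodule.smul_mem _ _ (step4 y hy)) ?_
    exact Submodule.mem_sup_right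
      (Jcast (show (m'+2)+1 = m'+3 by omega) (mem_pow_mul hhx (memJ1 hy)))

lemma layer_all (hnil : ∃ N, (jrad F A)^N = ⊥) {n : ℕ} {t₀ : A} (hn : 1 ≤ n)
    (ht₀ : t₀ ∈ (jrad F A)^n)
    (hlay₀ : (jrad F A)^n ≤ Submodule.span F {t₀} ⊔ (jrad F A)^(n+1)) :
    ∀ a, n ≤ a → ∃ t ∈ (jrad F A)^a,
      (jrad F A)^a ≤ Submodule.span F {t} ⊔ (jrad F A)^(a+1) := by
  have main : ∀ k, ∃ t ∈ (jrad F A)^(n+k),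
      (jrad F A)^(n+k) ≤ Submodule.span F {t} ⊔ (jrad F A)^(n+k+1) := by
    intro k
    induction k with
    | zero => exact ⟨t₀, ht₀, hlay₀⟩
    | succ k ih =>
      obtain ⟨t, ht, hl⟩ := ih
      obtain ⟨m', hm'⟩ : ∃ m', n + k = m' + 1 := ⟨n + k - 1, by omega⟩
      rw [hm'] at ht hl
      obtain ⟨t', ht', hl'⟩ := layer_step hnil ht hl
      have hidx : n + (k+1) = m' + 2 := by omega
      rw [hidx]
      exact ⟨t', ht', hl'⟩
  intro a ha
  obtain ⟨k, rfl⟩ : ∃ k, a = n + k := ⟨a - n, by omega⟩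
  exact main k


section Main
variable (s : A →ₗ[F] F)

/-- Lemma R: the recursive vanishing lemma. -/
lemma lemR (hs : ∀ a b : A, s (a * b) = s (b * a)) {M : ℕ}
    (HC : ∀ x ∈ (jrad F A)^(M+1), ∀ b : A, b * x = x * b) :
    ∀ m p (u z j : A), M + 2 ≤ p + m → u ∈ (jrad F A)^p → z ∈ (jrad F A)^m →
      s (u * (z * j - j * z)) = 0 := by
  intro m
  induction m with
  | zero =>
    intro p u z j hpm hu hz
    rw [pow_zero] at hz
    obtain ⟨y, rfl⟩ := Submodule.mem_one.mp hz
    have hcomm : algebraMap F A y * j - j * algebraMap F A y = 0 := by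
      rw [Algebra.commutes]
      exact sub_self _
    rw [hcomm, mul_zero, map_zero]
  | succ m ih =>
    intro p u z j hpm hu hz
    rw [pow_succ] at hz
    refine Submodule.mul_induction_on hz (fun z' hz' w hw => ?_) (fun x y hx hy => ?_)
    · rw [s_cocycle s hs u z' w j]
      have t1 : s ((u * z') * (w * j - j * w)) = 0 := by
        refine s_central_kill s hs ?_ w j
        intro b
        have hmem : u * z' ∈ (jrad F A)^(M+1) :=
          pow_le (by omega) (by omega) (mem_pow_mul hu hz')
        exact HC _ hmem b
      have t2 : s ((w * u) * (z' * j - j * z')) = 0 := by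
        refine ih (p+1) (w*u) z' j (by omega) ?_ hz'
        exact Jcast (by omega) (mem_pow_mul (memJ1 hw) hu)
      rw [t1, t2, add_zero]
    · have hxy : (x + y) * j - j * (x + y) = (x*j - j*x) + (y*j - j*y) := by
        rw [add_mul, mul_add]
        abel
      rw [hxy, mul_add, map_add, hx, hy, add_zero]

/-- the detector: an element pairing non-trivially with a layer generator -/
lemma detector (hs : ∀ a b : A, s (a * b) = s (b * a))
    (hker : ∀ I : Ideal A, (I : Set A) ⊆ {x | s x = 0} → I = ⊥)
    (hloc : ∀ a : A, ∃ c : F, a - algebraMap F A c ∈ Ideal.jacobson (⊥ : Ideal A))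
    {T a : ℕ} (hT1 : (jrad F A)^(T+1) = ⊥) (hTne : (jrad F A)^T ≠ ⊥)
    (haT : a ≤ T) {t : A} (ht : t ∈ (jrad F A)^a)
    (hlay : (jrad F A)^a ≤ Submodule.span F {t} ⊔ (jrad F A)^(a+1)) :
    ∃ u ∈ (jrad F A)^(T-a), s (u * t) ≠ 0 := by
  by_contra hcon
  push_neg at hcon
  apply hTne
  have hzero : ∀ u ∈ (jrad F A)^(T-a), u * t = 0 := by
    intro u hu
    refine soc_faithful s hs hker hloc ?_ (hcon u hu)
    intro j hj
    have h1 : u * t ∈ (jrad F A)^T := Jcast (by omega) (mem_pow_mul hu ht)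
    have h2 : j * (u*t) ∈ (jrad F A)^(T+1) := Jcast (by omega) (mem_pow_mul (memJ1 hj) h1)
    rw [hT1] at h2
    simpa using h2
  rw [eq_bot_iff]
  intro x hx
  have hxT : x ∈ (jrad F A)^(T-a) * (jrad F A)^a := by
    rw [← pow_add, show T-a+a = T by omega]
    exact hx
  refine Submodule.mul_induction_on hxT (fun u hu v hv => ?_) (fun a b ha hb => add_mem ha hb)
  obtain ⟨c, h, hh, hv'⟩ := decomp hlay hv
  rw [hv', mul_add, mul_smul_comm, hzero u hu, smul_zero, zero_add]
  have h2 : u * h ∈ (jrad F A)^(T+1) := Jcast (by omega) (mem_pow_mul hu hh)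
  rw [hT1] at h2
  exact h2

/-- the descent engine -/
lemma engine (hs : ∀ a b : A, s (a * b) = s (b * a))
    (hker : ∀ I : Ideal A, (I : Set A) ⊆ {x | s x = 0} → I = ⊥)
    (hloc : ∀ a : A, ∃ c : F, a - algebraMap F A c ∈ Ideal.jacobson (⊥ : Ideal A))
    {n T : ℕ}
    (lay : ∀ a, n ≤ a → ∃ t ∈ (jrad F A)^a,
      (jrad F A)^a ≤ Submodule.span F {t} ⊔ (jrad F A)^(a+1))
    (hT1 : (jrad F A)^(T+1) = ⊥) (hTne : (jrad F A)^T ≠ ⊥)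
    {M : ℕ} (hM : n ≤ M + 1)
    (HC : (jrad F A)^(M+1) ≤ Subalgebra.toSubmodule (Subalgebra.center F A)) :
    (jrad F A)^M ≤ Subalgebra.toSubmodule (Subalgebra.center F A) := by
  have HC' : ∀ x ∈ (jrad F A)^(M+1), ∀ b : A, b * x = x * b := by
    intro x hx b
    have hc := HC hx
    rw [Subalgebra.mem_toSubmodule, Subalgebra.mem_center_iff] at hc
    exact hc b
  intro z hz
  rw [Subalgebra.mem_toSubmodule, Subalgebra.mem_center_iff]
  have inner : ∀ b : ℕ, ∀ j ∈ jrad F A, z * j - j * z ∈ (jrad F A)^(M+1+b) := by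
    intro b
    induction b with
    | zero =>
      intro j hj
      refine sub_mem ?_ ?_
      · exact Jcast (by omega) (mem_pow_mul hz (memJ1 hj))
      · exact Jcast (by omega) (mem_pow_mul (memJ1 hj) hz)
    | succ b ih =>
      intro j hj
      have hidx : M + 1 + (b+1) = (M + 1 + b) + 1 := by omega
      rw [hidx]
      by_cases hcase1 : T + 1 ≤ M + 1 + b
      · -- the commutator is already zero
        have h0 : z * j - j * z ∈ (⊥ : Submodule F A) := by
          rw [← pow_eq_bot hT1 hcase1]
          exact ih j hj
        rw [Submodule.mem_bot] at h0
        rw [h0]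
        exact Submodule.zero_mem _
      · have haT : M + 1 + b ≤ T := by omega
        have han : n ≤ M + 1 + b := by omega
        obtain ⟨t, ht, hlay⟩ := lay (M + 1 + b) han
        obtain ⟨ε, h, hh, hdec⟩ := decomp hlay (ih j hj)
        by_cases hcase2 : M + 1 + b = T
        · -- top case: the commutator has zero trace
          have hst : s t ≠ 0 := by
            intro h0
            apply hTne
            have ht0 : t = 0 := by
              refine soc_faithful s hs hker hloc ?_ h0
              intro j' hj'
              have hmem := Jcast (show 1 + (M+1+b) = T+1 by omega)
                (mem_pow_mul (memJ1 hj') ht)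
              rw [hT1] at hmem
              simpa using hmem
            rw [eq_bot_iff]
            intro x hx
            have hx2 : x ∈ (jrad F A)^(M+1+b) := Jcast (by omega) hx
            obtain ⟨c', h', hh', hx'⟩ := decomp hlay hx2
            have hh'0 : h' ∈ (⊥ : Submodule F A) := by
              rw [← pow_eq_bot hT1 (show T+1 ≤ M+1+b+1 by omega)]
              exact hh'
            rw [Submodule.mem_bot] at hh'0
            rw [hx', ht0, hh'0, smul_zero, add_zero]
            exact Submodule.zero_mem _
          have hsc : s (z*j - j*z) = 0 := by
            rw [map_sub, hs]
            exact sub_self _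
          have hbot1 : h = 0 := by
            have hmem : h ∈ (⊥ : Submodule F A) := by
              rw [← pow_eq_bot hT1 (show T+1 ≤ M+1+b+1 by omega)]
              exact hh
            simpa using hmem
          have hε : ε = 0 := by
            have he : (0:F) = ε * s t := by
              rw [← hsc, hdec, hbot1, add_zero, map_smul, smul_eq_mul]
            rcases mul_eq_zero.mp he.symm with h0 | h0
            · exact h0
            · exact absurd h0 hst
          rw [hdec, hε, hbot1, zero_smul, zero_add]
          exact Submodule.zero_mem _
        · by_cases hcase3 : M + 1 + b + 1 = T
          · -- GAP case
            obtain ⟨u₀, hu₀, hu₀t⟩ := detector s hs hker hloc hT1 hTne haT ht hlay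
            have hu₀J : u₀ ∈ jrad F A := by
              rw [show T - (M+1+b) = 1 by omega, pow_one] at hu₀
              exact hu₀
            have eval : ∀ u ∈ jrad F A, ∀ (θ : F) (h' : A), h' ∈ (jrad F A)^(M+1+b+1) →
                ∀ w : A, w = θ • t + h' → s (u * w) = θ * s (u * t) := by
              intro u hu θ h' hh' w hw
              have huh : u * h' = 0 := by
                have hmem := Jcast (show 1+(M+1+b+1) = T+1 by omega)
                  (mem_pow_mul (memJ1 hu) hh')
                rw [hT1] at hmem
                simpa using hmem
              rw [hw, mul_add, mul_smul_comm, map_add, map_smul, huh, map_zero, add_zero,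
                smul_eq_mul]
            obtain ⟨θ₀, h₀, hh₀, hdec₀⟩ := decomp hlay (ih u₀ hu₀J)
            have hθ₀ : θ₀ = 0 := by
              have hdiag : s (u₀ * (z * u₀ - u₀ * z)) = 0 := s_diag s hs u₀ z
              have he := eval u₀ hu₀J θ₀ h₀ hh₀ _ hdec₀
              have hz0 : θ₀ * s (u₀ * t) = 0 := by rw [← he]; exact hdiag
              rcases mul_eq_zero.mp hz0 with h0 | h0
              · exact h0
              · exact absurd h0 hu₀t
            have hε : ε = 0 := by
              have e1 : s (u₀ * (z*j - j*z)) = ε * s (u₀ * t) := eval u₀ hu₀J ε h hh _ hdec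
              have e2 : s (j * (z*u₀ - u₀*z)) = θ₀ * s (j * t) := eval j hj θ₀ h₀ hh₀ _ hdec₀
              have e3 : s (u₀ * (z*j - j*z)) = - s (j * (z*u₀ - u₀*z)) := s_anti13 s hs u₀ z j
              have he : ε * s (u₀ * t) = 0 := by
                rw [← e1, e3, e2, hθ₀, zero_mul, neg_zero]
              rcases mul_eq_zero.mp he with h0 | h0
              · exact h0
              · exact absurd h0 hu₀t
            rw [hdec, hε, zero_smul, zero_add]
            exact hh
          · -- detection case with Lemma R
            obtain ⟨u, hu, hust⟩ := detector s hs hker hloc hT1 hTne haT ht hlay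
            have hR : s (u * (z * j - j * z)) = 0 :=
              lemR s hs HC' M (T - (M+1+b)) u z j (by omega) hu hz
            have huh : u * h = 0 := by
              have hmem := Jcast (show (T-(M+1+b))+(M+1+b+1) = T+1 by omega)
                (mem_pow_mul hu hh)
              rw [hT1] at hmem
              simpa using hmem
            have hε : ε = 0 := by
              have he : (0:F) = ε * s (u * t) := by
                rw [← hR, hdec, mul_add, mul_smul_comm, map_add, map_smul, huh, map_zero,
                  add_zero, smul_eq_mul]
              rcases mul_eq_zero.mp he.symm with h0 | h0
              · exact h0
              · exact absurd h0 hust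
            rw [hdec, hε, zero_smul, zero_add]
            exact hh
  intro bb
  obtain ⟨cb, hcb⟩ := hloc bb
  have hjz : ∀ j ∈ jrad F A, z * j - j * z = 0 := by
    intro j hj
    have hmem := inner (T+1) j hj
    have hb : (jrad F A)^(M+1+(T+1)) = ⊥ := pow_eq_bot hT1 (by omega)
    rw [hb] at hmem
    simpa using hmem
  have h1 := hjz _ hcb
  have hcomm : algebraMap F A cb * z - z * algebraMap F A cb = 0 := by
    rw [Algebra.commutes]
    exact sub_self _
  have expand : bb * z - z * bb =
      -(z * (bb - algebraMap F A cb) - (bb - algebraMap F A cb) * z)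
      + (algebraMap F A cb * z - z * algebraMap F A cb) := by
    rw [mul_sub, sub_mul]
    abel
  have hzero : bb * z - z * bb = 0 := by
    rw [expand, h1, hcomm]
    simp
  exact sub_eq_zero.mp hzero

end Main

/-- extract a generator of the one-dimensional layer -/
lemma layer_base {n : ℕ}
    (hdim : finrank F
      (↥(jrad F A ^ n) ⧸ Submodule.comap (jrad F A ^ n).subtype (jrad F A ^ (n + 1))) = 1) :
    ∃ t ∈ (jrad F A)^n, t ∉ (jrad F A)^(n+1) ∧
      (jrad F A)^n ≤ Submodule.span F {t} ⊔ (jrad F A)^(n+1) := by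
  obtain ⟨v, hv0, hv⟩ := finrank_eq_one_iff'.mp hdim
  obtain ⟨⟨t, ht⟩, hmk⟩ := Submodule.Quotient.mk_surjective _ v
  refine ⟨t, ht, ?_, ?_⟩
  · intro hcon
    apply hv0
    rw [← hmk]
    rw [Submodule.Quotient.mk_eq_zero]
    exact hcon
  · intro x hx
    obtain ⟨c, hc⟩ := hv (Submodule.Quotient.mk ⟨x, hx⟩)
    rw [← hmk, ← Submodule.Quotient.mk_smul, Submodule.Quotient.eq] at hc
    have h2 : c • t - x ∈ (jrad F A)^(n+1) := hc
    refine Submodule.mem_sup.mpr ⟨c • t,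
      Submodule.smul_mem _ _ (Submodule.mem_span_singleton_self t), -(c • t - x),
      neg_mem h2, by abel⟩

/-- existence of the top exponent -/
lemma exists_T [FiniteDimensional F A] {n : ℕ} (hJn : (jrad F A)^n ≠ ⊥) :
    ∃ T, n ≤ T ∧ (jrad F A)^T ≠ ⊥ ∧ (jrad F A)^(T+1) = ⊥ := by
  obtain ⟨N, hN⟩ := exists_pow_bot (F := F) (A := A)
  have hex : ∃ k, (jrad F A)^k = ⊥ := ⟨N, hN⟩
  classical
  have hbot : (jrad F A)^(Nat.find hex) = ⊥ := Nat.find_spec hex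
  have hpos : Nat.find hex ≠ 0 := by
    intro h0
    rw [h0, pow_zero] at hbot
    apply hJn
    have h1 : (jrad F A)^n = (jrad F A)^n * 1 := by rw [mul_one]
    rw [h1, hbot, Submodule.mul_bot]
  obtain ⟨T, hT⟩ : ∃ T, Nat.find hex = T + 1 := ⟨Nat.find hex - 1, by omega⟩
  refine ⟨T, ?_, ?_, ?_⟩
  · by_contra hcon
    push_neg at hcon
    exact hJn (pow_eq_bot (hT ▸ hbot) (by omega))
  · have := Nat.find_min hex (m := T) (by omega)
    exact this
  · exact hT ▸ hbot

end KulG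

/-- Külshammer's Lemma G: in a finite-dimensional local symmetric F-algebra,
if dim (J^n/J^(n+1)) = 1 then J^(n-1) ⊆ Z(A). -/
theorem jacobson_pow_le_center
    (F A : Type*) [Field F] [Ring A] [Algebra F A] [FiniteDimensional F A]
    (hloc : ∀ a : A, ∃ c : F, a - algebraMap F A c ∈ Ideal.jacobson (⊥ : Ideal A))
    (s : A →ₗ[F] F) (hs : ∀ a b : A, s (a * b) = s (b * a))
    (hker : ∀ I : Ideal A, (I : Set A) ⊆ {x | s x = 0} → I = ⊥)
    (n : ℕ) (hn : 1 ≤ n)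
    (hdim : finrank F
      (↥(jrad F A ^ n) ⧸ Submodule.comap (jrad F A ^ n).subtype (jrad F A ^ (n + 1))) = 1) :
    jrad F A ^ (n - 1) ≤ Subalgebra.toSubmodule (Subalgebra.center F A) := by
  classical
  obtain ⟨t₀, ht₀, ht₀n, hlay₀⟩ := KulG.layer_base hdim
  have hJn : (jrad F A)^n ≠ ⊥ := by
    intro hb
    apply ht₀n
    have : t₀ ∈ (⊥ : Submodule F A) := hb ▸ ht₀
    rw [Submodule.mem_bot] at this
    rw [this]
    exact Submodule.zero_mem _
  obtain ⟨T, hnT, hTne, hT1⟩ := KulG.exists_T hJn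
  have hnil : ∃ N, (jrad F A)^N = ⊥ := ⟨T+1, hT1⟩
  have lay := KulG.layer_all hnil hn ht₀ hlay₀
  have descent : ∀ d M, n ≤ M + 1 → T + 1 ≤ M + d →
      (jrad F A)^M ≤ Subalgebra.toSubmodule (Subalgebra.center F A) := by
    intro d
    induction d with
    | zero =>
      intro M hM hTM
      rw [KulG.pow_eq_bot hT1 (by omega)]
      exact bot_le
    | succ d ih =>
      intro M hM hTM
      by_cases hc : T + 1 ≤ M + d
      · exact ih M hM hc
      · exact KulG.engine s hs hker hloc lay hT1 hTne hM (ih (M+1) (by omega) (by omega))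
  exact descent (T + 2) (n - 1) (by omega) (by omega)
end

section
/- Let A be a local F-algebra and let x, z ∈ J(A) be such that {x + J(A)^2, z + J(A)^2} is F-linearly independent in J(A)/J(A)^2 and xz = zx = z^2 = 0. Let (f_i) be the shifted Fibonacci sequence f_{-1} = f_0 = 1, f_i = f_{i-1} + f_{i-2}. Then there is a minimal projective resolution (P_i) of the trivial A-module A/J(A) such that the number of A-module generators of P_i in a minimal generating set is at least f_i for all i ≥ 0. In particular, the trivial A-module has infinite complexity. -/
open Module

/-- The submodule J(A)·M of an A-module M, where J(A) is the Jacobson radical. -/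
def radSMul (A : Type) [Ring A] (M : Type) [AddCommGroup M] [Module A M] :
    Submodule A M :=
  Submodule.span A {p : M | ∃ r ∈ Ideal.jacobson (⊥ : Ideal A), ∃ q : M, p = r • q}

/-- A minimal projective resolution of the trivial module A/J(A) over a ring A:
finitely generated projective modules `P n`, a surjective augmentation
`ε : P 0 → A/J(A)` and differentials `d n : P (n+1) → P n`, exact, and with all
syzygies contained in J(A) times the corresponding projective module. -/
structure MinProjRes (A : Type) [Ring A] where
  P : ℕ → Type
  [acg : ∀ n, AddCommGroup (P n)]
  [mod : ∀ n, Module A (P n)]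
  proj : ∀ n, Module.Projective A (P n)
  fg : ∀ n, Module.Finite A (P n)
  ε : P 0 →ₗ[A] (A ⧸ Ideal.jacobson (⊥ : Ideal A))
  d : ∀ n, P (n + 1) →ₗ[A] P n
  surj : Function.Surjective ε
  exact_zero : LinearMap.range (d 0) = LinearMap.ker ε
  exact : ∀ n, LinearMap.range (d (n + 1)) = LinearMap.ker (d n)
  min_zero : LinearMap.ker ε ≤ radSMul A (P 0)
  minimal : ∀ n, LinearMap.ker (d n) ≤ radSMul A (P (n + 1))

attribute [instance] MinProjRes.acg MinProjRes.mod

/-- The dimension over F of an A-module, for A an F-algebra, via restriction of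
scalars. -/
noncomputable def fdim (F A : Type) [Field F] [Ring A] [Algebra F A]
    (M : Type) [AddCommGroup M] [Module A M] : ℕ :=
  @Module.finrank F M _ _ (Module.compHom M (algebraMap F A))

namespace InfCx

variable {F A : Type} [Field F] [Ring A] [Algebra F A]

def Jrad (A : Type) [Ring A] : Ideal A := Ideal.jacobson ⊥

theorem mem_Jrad_iff {a : A} : a ∈ Jrad A ↔ a ∈ Ideal.jacobson (⊥ : Ideal A) := Iff.rfl

theorem isUnit_one_add {j : A} (hj : j ∈ (Jrad A)) : IsUnit (1 + j) := by
  have key : ∀ j' : A, j' ∈ (Jrad A) → ∃ u, u * (1 + j') = 1 := by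
    intro j' hj'
    obtain ⟨u, hu⟩ := Ideal.mem_jacobson_iff.1 hj' 1
    rw [Ideal.mem_bot, sub_eq_zero] at hu
    exact ⟨u, by rw [mul_add, mul_one, add_comm]; simpa using hu⟩
  obtain ⟨u, hu⟩ := key j hj
  have hu' : u - 1 ∈ (Jrad A) := by
    have h1 : u + u * j = 1 := by
      have := hu; rw [mul_add, mul_one] at this; exact this
    have h2 : u - 1 = -(u * j) := by rw [← h1]; abel
    rw [h2]
    exact neg_mem (Ideal.mul_mem_left _ _ hj)
  obtain ⟨w, hw⟩ := key (u - 1) hu'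
  rw [add_sub_cancel] at hw
  have huu : (1 + j) * u = 1 := by
    have : w = 1 + j := by
      calc w = w * (u * (1 + j)) := by rw [hu, mul_one]
      _ = (w * u) * (1 + j) := by rw [mul_assoc]
      _ = 1 + j := by rw [hw, one_mul]
    rw [← this, hw]
  exact ⟨⟨1 + j, u, huu, hu⟩, rfl⟩

section Basic
variable (hloc : ∀ a : A, ∃ c : F, a - algebraMap F A c ∈ (Jrad A))

include hloc in
theorem mem_J_mul_right {a : A} (ha : a ∈ (Jrad A)) (b : A) : a * b ∈ (Jrad A) := by
  obtain ⟨c, hc⟩ := hloc b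
  have : a * b = algebraMap F A c * a + a * (b - algebraMap F A c) := by
    rw [Algebra.commutes c a, mul_sub]
    abel
  rw [this]
  exact add_mem (Ideal.mul_mem_left _ _ ha) (Ideal.mul_mem_left _ _ hc)

include hloc in
theorem isUnit_of_not_mem_J {a : A} (ha : a ∉ (Jrad A)) : IsUnit a := by
  obtain ⟨c, hc⟩ := hloc a
  have hc0 : c ≠ 0 := by
    rintro rfl
    exact ha (by simpa using hc)
  have key : a = algebraMap F A c * (1 + algebraMap F A c⁻¹ * (a - algebraMap F A c)) := by
    rw [mul_add, mul_one, ← mul_assoc, ← map_mul, mul_inv_cancel₀ hc0, map_one, one_mul]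
    abel
  rw [key]
  exact ((isUnit_iff_ne_zero.2 hc0).map (algebraMap F A)).mul
    (isUnit_one_add (Ideal.mul_mem_left _ _ hc))

theorem J_ne_top [Nontrivial A] : ((Jrad A) : Ideal A) ≠ ⊤ := by
  intro h
  unfold Jrad at h
  rw [Ideal.jacobson_eq_top_iff] at h
  have : (1 : A) ∈ (⊥ : Ideal A) := h ▸ trivial
  rw [Ideal.mem_bot] at this
  exact one_ne_zero this

theorem eq_zero_of_algebraMap_mem [Nontrivial A] {c : F} (h : algebraMap F A c ∈ (Jrad A)) :
    c = 0 := by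
  by_contra hc0
  have hu : IsUnit (algebraMap F A c) := (isUnit_iff_ne_zero.2 hc0).map (algebraMap F A)
  obtain ⟨u, hu⟩ := hu
  have : (1 : A) ∈ (Jrad A) := by
    have : (↑u⁻¹ : A) * ↑u ∈ (Jrad A) := Ideal.mul_mem_left _ _ (hu ▸ h)
    rwa [u.inv_mul] at this
  exact J_ne_top ((Ideal.eq_top_iff_one _).2 this)

end Basic

section Rad
variable (A)
def rad2 (M : Type) [AddCommGroup M] [Module A M] : Submodule A M :=
  Submodule.span A {p : M | ∃ r ∈ (Jrad A), ∃ s ∈ (Jrad A), ∃ q : M, p = r • s • q}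
variable {A}

theorem smul_mem_radSMul {M : Type} [AddCommGroup M] [Module A M] {r : A} (hr : r ∈ (Jrad A))
    (m : M) : r • m ∈ radSMul A M :=
  Submodule.subset_span ⟨r, hr, m, rfl⟩

theorem map_mem_radSMul {M N : Type} [AddCommGroup M] [Module A M] [AddCommGroup N]
    [Module A N] (f : M →ₗ[A] N) {m : M} (hm : m ∈ radSMul A M) : f m ∈ radSMul A N := by
  induction hm using Submodule.span_induction with
  | mem p hp => obtain ⟨r, hr, q, rfl⟩ := hp; rw [map_smul]; exact smul_mem_radSMul hr _
  | zero => simp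
  | add p q _ _ h1 h2 => rw [map_add]; exact add_mem h1 h2
  | smul a p _ h => rw [map_smul]; exact Submodule.smul_mem _ _ h

variable (hloc : ∀ a : A, ∃ c : F, a - algebraMap F A c ∈ (Jrad A))

include hloc in
theorem smul_radSMul_mem_rad2 {M : Type} [AddCommGroup M] [Module A M] {m : M}
    (hm : m ∈ radSMul A M) : ∀ r ∈ (Jrad A), r • m ∈ rad2 A M := by
  induction hm using Submodule.span_induction with
  | mem p hp =>
    obtain ⟨s, hs, q, rfl⟩ := hp
    exact fun r hr => Submodule.subset_span ⟨r, hr, s, hs, q, rfl⟩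
  | zero => intro r _; simp
  | add p q _ _ h1 h2 => intro r hr; rw [smul_add]; exact add_mem (h1 r hr) (h2 r hr)
  | smul a p _ h =>
    intro r hr
    rw [smul_smul]
    exact h (r * a) (mem_J_mul_right hloc hr a)

include hloc in
theorem map_radSMul_mem_rad2 {M N : Type} [AddCommGroup M] [Module A M] [AddCommGroup N]
    [Module A N] (f : M →ₗ[A] N) (hf : ∀ p : M, f p ∈ radSMul A N) {m : M}
    (hm : m ∈ radSMul A M) : f m ∈ rad2 A N := by
  induction hm using Submodule.span_induction with
  | mem p hp =>
    obtain ⟨r, hr, q, rfl⟩ := hp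
    rw [map_smul]
    exact smul_radSMul_mem_rad2 hloc (hf q) r hr
  | zero => simp
  | add p q _ _ h1 h2 => rw [map_add]; exact add_mem h1 h2
  | smul a p _ h => rw [map_smul]; exact Submodule.smul_mem _ _ h

end Rad

section Pi
variable (hloc : ∀ a : A, ∃ c : F, a - algebraMap F A c ∈ (Jrad A))

include hloc in
theorem mem_radSMul_pi_iff {k : ℕ} {p : Fin k → A} :
    p ∈ radSMul A (Fin k → A) ↔ ∀ i, p i ∈ (Jrad A) := by
  constructor
  · intro hp
    induction hp using Submodule.span_induction with
    | mem q hq =>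
      obtain ⟨r, hr, q', rfl⟩ := hq
      intro i
      exact mem_J_mul_right hloc hr (q' i)
    | zero => intro i; simp
    | add q q' _ _ h1 h2 => intro i; exact add_mem (h1 i) (h2 i)
    | smul a q _ h => intro i; exact Ideal.mul_mem_left _ _ (h i)
  · intro hp
    classical
    have h1 : ∀ i : Fin k, (p i) • (Pi.single (M := fun _ => A) i 1) = Pi.single i (p i) := by
      intro i
      funext j
      simp [Pi.single_apply, mul_ite]
    have hrep : p = ∑ i : Fin k, (p i) • (Pi.single (M := fun _ => A) i 1) := by
      simp_rw [h1]
      rw [Finset.univ_sum_single]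
    rw [hrep]
    exact Submodule.sum_mem _ fun i _ => smul_mem_radSMul (hp i) _

end Pi

section J2
def J2 (F A : Type) [Field F] [Ring A] [Algebra F A] : Submodule F A :=
  (Submodule.restrictScalars F (Ideal.jacobson (⊥ : Ideal A))) ^ 2

theorem mul_mem_J2 {a b : A} (ha : a ∈ (Jrad A)) (hb : b ∈ (Jrad A)) : a * b ∈ J2 F A := by
  rw [J2, sq]
  exact Submodule.mul_mem_mul ha hb

variable (hloc : ∀ a : A, ∃ c : F, a - algebraMap F A c ∈ (Jrad A))

include hloc in
theorem J2_mul_right {w : A} (hw : w ∈ J2 F A) (a : A) : w * a ∈ J2 F A := by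
  rw [J2, sq] at hw
  refine Submodule.mul_induction_on hw (fun m hm n hn => ?_) (fun p q h1 h2 => ?_)
  · rw [mul_assoc]; exact mul_mem_J2 hm (mem_J_mul_right hloc hn a)
  · rw [add_mul]; exact add_mem h1 h2

theorem J2_mul_left {w : A} (hw : w ∈ J2 F A) (a : A) : a * w ∈ J2 F A := by
  rw [J2, sq] at hw
  refine Submodule.mul_induction_on hw (fun m hm n hn => ?_) (fun p q h1 h2 => ?_)
  · rw [← mul_assoc]; exact mul_mem_J2 (Ideal.mul_mem_left _ _ hm) hn
  · rw [mul_add]; exact add_mem h1 h2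

include hloc in
theorem rad2_pi_component {k : ℕ} {p : Fin k → A} (hp : p ∈ rad2 A (Fin k → A)) (i : Fin k) :
    p i ∈ J2 F A := by
  induction hp using Submodule.span_induction with
  | mem q hq =>
    obtain ⟨r, hr, s, hs, q', rfl⟩ := hq
    have : (r • s • q') i = r * (s * q' i) := rfl
    rw [this]
    exact mul_mem_J2 hr (mem_J_mul_right hloc hs (q' i))
  | zero => simp
  | add q q' _ _ h1 h2 => exact add_mem h1 h2
  | smul a q _ h => exact J2_mul_left h a

end J2

section Quot

variable (hloc : ∀ a : A, ∃ c : F, a - algebraMap F A c ∈ (Jrad A))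

include hloc in
theorem radSMul_quot_eq_bot :
    radSMul A (A ⧸ (Ideal.jacobson (⊥ : Ideal A))) = ⊥ := by
  rw [radSMul, Submodule.span_eq_bot]
  rintro p ⟨r, hr, q, rfl⟩
  obtain ⟨a, rfl⟩ := Submodule.Quotient.mk_surjective _ q
  rw [← Submodule.Quotient.mk_smul, Submodule.Quotient.mk_eq_zero]
  exact mem_J_mul_right hloc hr a

end Quot

section Cover

structure Cover (A : Type) [Ring A] (M : Type) [AddCommGroup M] [Module A M] where
  k : ℕ
  π : (Fin k → A) →ₗ[A] M
  surj : Function.Surjective π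
  ker_le : LinearMap.ker π ≤ radSMul A (Fin k → A)

variable (hloc : ∀ a : A, ∃ c : F, a - algebraMap F A c ∈ (Jrad A))

/-- the linear map given by a finite family of generators -/
def piMap {R M : Type} [Semiring R] [AddCommMonoid M] [Module R M] {ι : Type} [Fintype ι]
    (v : ι → M) : (ι → R) →ₗ[R] M where
  toFun a := ∑ i, a i • v i
  map_add' a b := by simp [add_smul, Finset.sum_add_distrib]
  map_smul' r a := by simp [Finset.smul_sum, smul_smul]

include hloc in
theorem cover_exists (M : Type) [AddCommGroup M] [Module A M] [Module.Finite A M] :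
    Nonempty (Cover A M) := by
  classical
  have hex : ∃ n : ℕ, ∃ v : Fin n → M, Submodule.span A (Set.range v) = ⊤ :=
    Module.Finite.exists_fin
  set k := Nat.find hex with hk
  obtain ⟨v, hv⟩ := Nat.find_spec hex
  refine ⟨⟨k, piMap v, ?_, ?_⟩⟩
  · intro m
    have hm : m ∈ Submodule.span A (Set.range v) := by rw [hv]; trivial
    obtain ⟨c, hc⟩ := (Submodule.mem_span_range_iff_exists_fun A).1 hm
    exact ⟨c, hc⟩
  · intro a ha
    rw [LinearMap.mem_ker] at ha
    rw [mem_radSMul_pi_iff hloc]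
    by_contra hbad
    push_neg at hbad
    obtain ⟨i, hi⟩ := hbad
    obtain ⟨u, hu⟩ := isUnit_of_not_mem_J hloc hi
    -- v i lies in the span of the other v's
    have hsum : a i • v i = -∑ j ∈ Finset.univ.erase i, a j • v j := by
      have h0 : ∑ j ∈ Finset.univ.erase i, a j • v j + a i • v i = 0 := by
        rw [Finset.sum_erase_add _ _ (Finset.mem_univ i)]
        exact ha
      exact eq_neg_of_add_eq_zero_right h0
    have hvi : v i ∈ Submodule.span A (Set.range (fun j : {j : Fin k // j ≠ i} => v ↑j)) := by
      have h2 : v i = (↑u⁻¹ : A) • (a i • v i) := by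
        rw [← hu, smul_smul, u.inv_mul, one_smul]
      have hvim : v i = ∑ j ∈ Finset.univ.erase i, (-((↑u⁻¹ : A) * a j)) • v j := by
        rw [h2, hsum, smul_neg, Finset.smul_sum]
        rw [← Finset.sum_neg_distrib]
        refine Finset.sum_congr rfl fun j _ => ?_
        rw [smul_smul, neg_smul]
      rw [hvim]
      refine Submodule.sum_mem _ fun j hj => Submodule.smul_mem _ _ ?_
      exact Submodule.subset_span ⟨⟨j, Finset.ne_of_mem_erase hj⟩, rfl⟩
    have hspan' : Submodule.span A (Set.range fun j : {j : Fin k // j ≠ i} => v ↑j) = ⊤ := by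
      rw [eq_top_iff, ← hv, Submodule.span_le]
      rintro _ ⟨j, rfl⟩
      by_cases hji : j = i
      · subst hji; exact hvi
      · exact Submodule.subset_span ⟨⟨j, hji⟩, rfl⟩
    have hcard : Fintype.card {j : Fin k // j ≠ i} = k - 1 := by
      rw [Fintype.card_subtype_compl, Fintype.card_subtype_eq, Fintype.card_fin]
    have hw : ∃ w : Fin (k - 1) → M, Submodule.span A (Set.range w) = ⊤ := by
      refine ⟨(fun j : {j : Fin k // j ≠ i} => v ↑j) ∘ (Fintype.equivFinOfCardEq hcard).symm, ?_⟩
      rw [Set.range_comp, Equiv.range_eq_univ, Set.image_univ]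
      exact hspan'
    exact Nat.find_min hex (Nat.sub_lt i.pos one_pos) hw

end Cover

section Tower

structure BM (A : Type) [Ring A] where
  M : Type
  acg : AddCommGroup M
  mod : @Module A M _ acg.toAddCommMonoid
  fin : @Module.Finite A M _ acg.toAddCommMonoid mod
attribute [instance] BM.acg BM.mod BM.fin

theorem noeth [FiniteDimensional F A] : IsNoetherianRing A :=
  isNoetherian_of_tower F inferInstance

variable (hloc : ∀ a : A, ∃ c : F, a - algebraMap F A c ∈ (Jrad A))

noncomputable def mkCover (M : Type) [AddCommGroup M] [Module A M] [Module.Finite A M] :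
    Cover A M :=
  (cover_exists hloc M).some

noncomputable def baseBM : BM A :=
  ⟨A ⧸ (Ideal.jacobson (⊥ : Ideal A)), inferInstance, inferInstance,
    Module.Finite.of_surjective (Submodule.mkQ _) (Submodule.Quotient.mk_surjective _)⟩

theorem kerFin [FiniteDimensional F A] {M : Type} [AddCommGroup M] [Module A M] {k : ℕ}
    (f : (Fin k → A) →ₗ[A] M) : Module.Finite A ↥(LinearMap.ker f) := by
  haveI : IsNoetherianRing A := noeth (F := F) (A := A)
  exact Module.Finite.iff_fg.2 (IsNoetherian.noetherian _)


variable [FiniteDimensional F A]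

noncomputable def stepBM (m : BM A) : BM A :=
  ⟨↥(LinearMap.ker (mkCover hloc m.M).π), inferInstance, inferInstance,
    kerFin (F := F) _⟩

noncomputable def bm (n : ℕ) : BM A :=
  Nat.rec (baseBM (A := A)) (fun _ prev => stepBM hloc prev) n

noncomputable def covn (n : ℕ) : Cover A (bm hloc n).M :=
  mkCover hloc (bm hloc n).M

noncomputable def BB (n : ℕ) : (Fin (covn hloc n).k → A) →ₗ[A] (bm hloc n).M :=
  (covn hloc n).π

noncomputable def dd (n : ℕ) :
    (Fin (covn hloc (n + 1)).k → A) →ₗ[A] (Fin (covn hloc n).k → A) :=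
  (LinearMap.ker (BB hloc n)).subtype.comp
    (BB hloc (n + 1) : (Fin (covn hloc (n + 1)).k → A) →ₗ[A] ↥(LinearMap.ker (BB hloc n)))

theorem range_dd (n : ℕ) : LinearMap.range (dd hloc n) = LinearMap.ker (BB hloc n) := by
  have h1 : LinearMap.range
      (BB hloc (n + 1) : (Fin (covn hloc (n + 1)).k → A) →ₗ[A] ↥(LinearMap.ker (BB hloc n)))
      = ⊤ :=
    LinearMap.range_eq_top.2 (covn hloc (n + 1)).surj
  rw [dd]
  exact (LinearMap.range_comp_of_range_eq_top _ h1).trans (Submodule.range_subtype _)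

theorem ker_dd (n : ℕ) : LinearMap.ker (dd hloc n) = LinearMap.ker (BB hloc (n + 1)) := by
  rw [dd]
  exact LinearMap.ker_comp_of_ker_eq_bot _ (Submodule.ker_subtype _)

theorem ker_BB_le (n : ℕ) :
    LinearMap.ker (BB hloc n) ≤ radSMul A (Fin (covn hloc n).k → A) :=
  (covn hloc n).ker_le

theorem dd_mem_radSMul (n : ℕ) (p : Fin (covn hloc (n + 1)).k → A) :
    dd hloc n p ∈ radSMul A (Fin (covn hloc n).k → A) :=
  ker_BB_le hloc n (range_dd hloc n ▸ LinearMap.mem_range_self (dd hloc n) p)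

theorem dd_radSMul_mem_rad2 (n : ℕ) {p : Fin (covn hloc (n + 1)).k → A}
    (hp : p ∈ radSMul A (Fin (covn hloc (n + 1)).k → A)) :
    dd hloc n p ∈ rad2 A (Fin (covn hloc n).k → A) :=
  map_radSMul_mem_rad2 hloc (dd hloc n) (dd_mem_radSMul hloc n) hp

end Tower

section Words

def ZXI : ℕ → Type × Type
  | 0 => (PUnit, PEmpty)
  | n+1 => ((ZXI n).1 ⊕ (ZXI n).2, (ZXI n).1)

abbrev ZI (n : ℕ) : Type := (ZXI n).1
abbrev XI (n : ℕ) : Type := (ZXI n).2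

example (n : ℕ) : ZI (n+1) = ((ZI n) ⊕ (XI n)) := rfl
example (n : ℕ) : XI (n+1) = ZI n := rfl

def instZXI : ∀ n, Fintype (ZI n) × Fintype (XI n)
  | 0 => (inferInstanceAs (Fintype PUnit), inferInstanceAs (Fintype PEmpty))
  | n+1 =>
    letI := (instZXI n).1
    letI := (instZXI n).2
    (inferInstanceAs (Fintype ((ZI n) ⊕ (XI n))), (instZXI n).1)

instance (n : ℕ) : Fintype (ZI n) := (instZXI n).1
instance (n : ℕ) : Fintype (XI n) := (instZXI n).2

theorem card_ZXI : ∀ n, Fintype.card (ZI n) = Nat.fib (n+1) ∧ Fintype.card (XI n) = Nat.fib n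
  | 0 => by
    constructor
    · show Fintype.card PUnit = Nat.fib 1
      simp
    · show Fintype.card PEmpty = Nat.fib 0
      simp
  | n+1 => by
    obtain ⟨h1, h2⟩ := card_ZXI n
    constructor
    · show Fintype.card ((ZI n) ⊕ (XI n)) = Nat.fib (n+2)
      rw [Fintype.card_sum, h1, h2, Nat.fib_add_two]
      omega
    · show Fintype.card (ZI n) = Nat.fib (n+1)
      exact h1

end Words

section KeyL

variable (hloc : ∀ a : A, ∃ c : F, a - algebraMap F A c ∈ (Jrad A)) [Nontrivial A]

theorem smul_single_one {ι R : Type} [DecidableEq ι] [Semiring R] (i : ι) (c : R) :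
    c • (Pi.single (M := fun _ => R) i 1) = Pi.single i c := by
  funext j
  simp [Pi.single_apply, mul_ite]

include hloc in
theorem keyL {k : ℕ} {ι : Type} [Fintype ι] (v : ι → (Fin k → A))
    (hind : ∀ c : ι → F,
      (∑ t, algebraMap F A (c t) • v t) ∈ radSMul A (Fin k → A) → ∀ t, c t = 0) :
    ∀ r : ι → A, (∑ t, r t • v t) ∈ rad2 A (Fin k → A) → ∀ t, r t ∈ J2 F A := by
  classical
  choose sc hsc using hloc
  set vbar : ι → (Fin k → F) := fun t s => sc (v t s) with hvbar
  -- linear independence of the rows mod J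
  have hli : ∀ g : ι → F, (∑ t, g t • vbar t) = 0 → ∀ t, g t = 0 := by
    intro g hg
    apply hind g
    rw [mem_radSMul_pi_iff (fun a => ⟨sc a, hsc a⟩)]
    intro s
    have happ : (∑ t, algebraMap F A (g t) • v t) s = ∑ t, algebraMap F A (g t) * v t s := by
      rw [Finset.sum_apply]
      refine Finset.sum_congr rfl fun t _ => ?_
      rw [Pi.smul_apply, smul_eq_mul]
    rw [happ]
    have hsplit : ∀ t : ι, algebraMap F A (g t) * v t s
        = algebraMap F A (g t * vbar t s)
          + algebraMap F A (g t) * (v t s - algebraMap F A (vbar t s)) := by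
      intro t
      rw [map_mul, mul_sub]
      abel
    rw [Finset.sum_congr rfl (fun t _ => hsplit t), Finset.sum_add_distrib, ← map_sum]
    have h0 : ∑ t, g t * vbar t s = 0 := by
      have := congrFun hg s
      simpa [Finset.sum_apply] using this
    rw [h0, map_zero, zero_add]
    exact Submodule.sum_mem _ fun t _ => Ideal.mul_mem_left _ _ (hsc _)
  -- dual functionals over F
  have hker : LinearMap.ker (piMap (R := F) vbar) = ⊥ := by
    rw [LinearMap.ker_eq_bot']
    intro g hg
    funext t
    exact hli g hg t
  obtain ⟨gmap, hgmap⟩ := (piMap (R := F) vbar).exists_leftInverse_of_injective hker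
  set u : ι → Fin k → F := fun t s => gmap (Pi.single s 1) t with hu
  have hgapp : ∀ w : Fin k → F, ∀ t, gmap w t = ∑ s, w s * u t s := by
    intro w t
    have hw : w = ∑ s, w s • (Pi.single (M := fun _ => F) s 1) := by
      simp_rw [smul_single_one]
      rw [Finset.univ_sum_single]
    conv_lhs => rw [hw]
    rw [map_sum]
    rw [Finset.sum_apply]
    refine Finset.sum_congr rfl fun s _ => ?_
    rw [map_smul]
    simp [hu, smul_eq_mul]
  have hdual : ∀ t t' : ι, ∑ s, vbar t' s * u t s = if t = t' then 1 else 0 := by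
    intro t t'
    have h1 : piMap (R := F) vbar (Pi.single (M := fun _ => F) t' 1) = vbar t' := by
      show ∑ t'', (Pi.single (M := fun _ => F) t' 1) t'' • vbar t'' = vbar t'
      simp [Pi.single_apply, ite_smul]
    have h2 : gmap (vbar t') = Pi.single (M := fun _ => F) t' 1 := by
      rw [← h1]
      have := congrFun (congrArg DFunLike.coe hgmap) (Pi.single (M := fun _ => F) t' 1)
      simpa using this
    have h3 := congrFun h2 t
    rw [hgapp (vbar t') t] at h3
    rw [h3, Pi.single_apply]
  -- zeroth approximation
  set Y0 : ι → Fin k → A := fun t s => algebraMap F A (u t s) with hY0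
  set E : ι → ι → A := fun t t' => ∑ s, v t' s * Y0 t s with hE
  set Dm : ι → ι → A := fun t t' => E t t' - algebraMap F A (if t = t' then 1 else 0) with hDm
  have hDmJ : ∀ t t', Dm t t' ∈ (Jrad A) := by
    intro t t'
    have hsplit : ∀ s, v t' s * Y0 t s
        = algebraMap F A (vbar t' s * u t s)
          + (v t' s - algebraMap F A (vbar t' s)) * algebraMap F A (u t s) := by
      intro s
      rw [map_mul, sub_mul]
      abel
    have : E t t' = algebraMap F A (if t = t' then 1 else 0)
        + ∑ s, (v t' s - algebraMap F A (vbar t' s)) * algebraMap F A (u t s) := by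
      rw [hE]
      simp only []
      rw [Finset.sum_congr rfl (fun s _ => hsplit s), Finset.sum_add_distrib, ← map_sum,
        hdual t t']
    rw [hDm]
    simp only []
    rw [this]
    rw [add_sub_cancel_left]
    exact Submodule.sum_mem _ fun s _ => mem_J_mul_right (fun a => ⟨sc a, hsc a⟩) (hsc _) _
  set Y : ι → Fin k → A := fun t s => Y0 t s - ∑ t', Y0 t' s * Dm t t' with hY
  have hkey : ∀ t t', ∑ s, v t' s * Y t s - algebraMap F A (if t = t' then 1 else 0) ∈ J2 F A := by
    intro t t'
    have hstep : ∑ s, v t' s * Y t s = E t t' - ∑ t'', E t'' t' * Dm t t'' := by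
      rw [hY]
      simp only []
      have h4 : ∀ s, v t' s * (Y0 t s - ∑ t'', Y0 t'' s * Dm t t'')
          = v t' s * Y0 t s - ∑ t'', v t' s * Y0 t'' s * Dm t t'' := by
        intro s
        rw [mul_sub, Finset.mul_sum]
        simp_rw [mul_assoc]
      rw [Finset.sum_congr rfl fun s _ => h4 s, Finset.sum_sub_distrib]
      congr 1
      rw [Finset.sum_comm]
      refine Finset.sum_congr rfl fun t'' _ => ?_
      rw [← Finset.sum_mul]
    have hEd : ∀ t'' , E t'' t' = algebraMap F A (if t'' = t' then 1 else 0) + Dm t'' t' := by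
      intro t''
      rw [hDm]
      simp only []
      abel
    have hsum2 : ∑ t'', E t'' t' * Dm t t''
        = Dm t t' + ∑ t'', Dm t'' t' * Dm t t'' := by
      rw [Finset.sum_congr rfl fun t'' _ => by rw [hEd t'', add_mul]]
      rw [Finset.sum_add_distrib]
      congr 1
      have : ∀ t'' : ι, algebraMap F A (if t'' = t' then 1 else 0) * Dm t t''
          = if t'' = t' then Dm t t'' else 0 := by
        intro t''
        by_cases h : t'' = t' <;> simp [h]
      rw [Finset.sum_congr rfl fun t'' _ => this t'']
      rw [Finset.sum_ite_eq' Finset.univ t' (fun t'' => Dm t t'')]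
      simp
    rw [hstep, hsum2, hEd t]
    have : algebraMap F A (if t = t' then 1 else 0) + Dm t t'
        - (Dm t t' + ∑ t'', Dm t'' t' * Dm t t'') - algebraMap F A (if t = t' then 1 else 0)
        = -(∑ t'', Dm t'' t' * Dm t t'') := by
      abel
    rw [this]
    exact neg_mem (Submodule.sum_mem _ fun t'' _ => mul_mem_J2 (hDmJ t'' t') (hDmJ t t''))
  -- conclusion
  intro r hr t
  have hcomp : ∀ s, (∑ t', r t' • v t') s ∈ J2 F A :=
    fun s => rad2_pi_component (fun a => ⟨sc a, hsc a⟩) hr s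
  have hmain : r t = ∑ s, (∑ t', r t' • v t') s * Y t s
      - ∑ t', r t' * (∑ s, v t' s * Y t s - algebraMap F A (if t = t' then 1 else 0)) := by
    have h5 : ∀ s, (∑ t', r t' • v t') s * Y t s = ∑ t', r t' * (v t' s * Y t s) := by
      intro s
      rw [Finset.sum_apply, Finset.sum_mul]
      refine Finset.sum_congr rfl fun t' _ => ?_
      rw [Pi.smul_apply, smul_eq_mul, mul_assoc]
    rw [Finset.sum_congr rfl fun s _ => h5 s, Finset.sum_comm]
    have h6 : ∀ t', ∑ s, r t' * (v t' s * Y t s) = r t' * (∑ s, v t' s * Y t s) := by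
      intro t'
      rw [Finset.mul_sum]
    rw [Finset.sum_congr rfl fun t' _ => h6 t']
    have h7 : ∀ t', r t' * (∑ s, v t' s * Y t s - algebraMap F A (if t = t' then 1 else 0))
        = r t' * (∑ s, v t' s * Y t s) - r t' * algebraMap F A (if t = t' then 1 else 0) := by
      intro t'
      rw [mul_sub]
    rw [Finset.sum_congr rfl fun t' _ => h7 t', Finset.sum_sub_distrib]
    have h8 : ∑ t', r t' * algebraMap F A (if t = t' then 1 else 0) = r t := by
      have : ∀ t', r t' * algebraMap F A (if t = t' then 1 else 0)
          = if t' = t then r t' else 0 := by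
        intro t'
        by_cases h : t' = t
        · subst h; simp
        · have h' : ¬ (t = t') := fun hh => h hh.symm
          simp [h, h']
      rw [Finset.sum_congr rfl fun t' _ => this t']
      rw [Finset.sum_ite_eq' Finset.univ t (fun t' => r t')]
      simp
    rw [h8]
    abel
  rw [hmain]
  refine sub_mem (Submodule.sum_mem _ fun s _ => J2_mul_right (fun a => ⟨sc a, hsc a⟩) (hcomp s) _)
    (Submodule.sum_mem _ fun t' _ => J2_mul_left (hkey t t') _)

end KeyL

section Levels

variable (hloc : ∀ a : A, ∃ c : F, a - algebraMap F A c ∈ (Jrad A))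
variable [FiniteDimensional F A] [Nontrivial A]
variable (x z : A)

include hloc in
theorem smul_quot_eq_zero {r : A} (hr : r ∈ Jrad A)
    (m : A ⧸ (Ideal.jacobson (⊥ : Ideal A))) : r • m = 0 := by
  obtain ⟨a, rfl⟩ := Submodule.Quotient.mk_surjective _ m
  rw [← Submodule.Quotient.mk_smul, Submodule.Quotient.mk_eq_zero]
  exact mem_J_mul_right hloc hr a

structure Level (n : ℕ) where
  Zf : ZI n → (Fin (covn hloc n).k → A)
  Xf : XI n → (Fin (covn hloc n).k → A)
  kZz : ∀ a, BB hloc n (z • Zf a) = 0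
  kZx : ∀ a, BB hloc n (x • Zf a) = 0
  kXz : ∀ b, BB hloc n (z • Xf b) = 0
  ind : ∀ (c : ZI n → F) (e : XI n → F),
    (∑ a, algebraMap F A (c a) • Zf a + ∑ b, algebraMap F A (e b) • Xf b)
      ∈ radSMul A (Fin (covn hloc n).k → A) → (∀ a, c a = 0) ∧ (∀ b, e b = 0)

noncomputable def e0 : Fin (covn hloc 0).k → A :=
  ((covn hloc 0).surj
    (Submodule.Quotient.mk 1 : A ⧸ (Ideal.jacobson (⊥ : Ideal A)))).choose

theorem e0_spec : BB hloc 0 (e0 hloc)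
    = (Submodule.Quotient.mk 1 : A ⧸ (Ideal.jacobson (⊥ : Ideal A))) :=
  ((covn hloc 0).surj _).choose_spec

variable (hx : x ∈ Jrad A) (hz : z ∈ Jrad A)

include hx hz in
noncomputable def level0 : Level hloc x z 0 where
  Zf := fun _ => e0 hloc
  Xf := fun b => PEmpty.elim b
  kZz := fun _ => by
    rw [map_smul, e0_spec]
    exact smul_quot_eq_zero hloc hz _
  kZx := fun _ => by
    rw [map_smul, e0_spec]
    exact smul_quot_eq_zero hloc hx _
  kXz := fun b => PEmpty.elim b
  ind := by
    intro c e hS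
    replace hS : (∑ u : PUnit, algebraMap F A (c u) • e0 hloc
        + ∑ b : PEmpty, algebraMap F A (e b) • PEmpty.elim b)
        ∈ radSMul A (Fin (covn hloc 0).k → A) := hS
    rw [Finset.univ_eq_empty (α := PEmpty), Finset.sum_empty, add_zero] at hS
    have hone : (∑ u : PUnit, algebraMap F A (c u) • e0 hloc)
        = algebraMap F A (c PUnit.unit) • e0 hloc := by simp
    rw [hone] at hS
    have hB := map_mem_radSMul (BB hloc 0) hS
    have hbot : radSMul A ((bm hloc 0).M) = ⊥ := radSMul_quot_eq_bot hloc
    rw [hbot, Submodule.mem_bot] at hB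
    rw [map_smul, e0_spec] at hB
    replace hB : (algebraMap F A (c PUnit.unit))
        • (Submodule.Quotient.mk (1:A) : A ⧸ (Ideal.jacobson (⊥ : Ideal A))) = 0 := hB
    rw [← Submodule.Quotient.mk_smul, Submodule.Quotient.mk_eq_zero, smul_eq_mul,
      mul_one] at hB
    have hc0 : c PUnit.unit = 0 := eq_zero_of_algebraMap_mem hB
    constructor
    · intro a
      exact hc0
    · intro b
      exact PEmpty.elim b


noncomputable def levelStep
    (hindep : ∀ c₁ c₂ : F, c₁ • x + c₂ • z ∈
      (Submodule.restrictScalars F (Ideal.jacobson (⊥ : Ideal A))) ^ 2 → c₁ = 0 ∧ c₂ = 0)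
    (hxz : x * z = 0) (hzx : z * x = 0) (hzz : z * z = 0)
    {n : ℕ} (L : Level hloc x z n) : Level hloc x z (n + 1) := by
  classical
  -- lifts
  have hZl : ∀ a : ZI n, ∃ w, dd hloc n w = z • L.Zf a := by
    intro a
    have : z • L.Zf a ∈ LinearMap.ker (BB hloc n) := LinearMap.mem_ker.2 (L.kZz a)
    rw [← range_dd hloc n] at this
    exact LinearMap.mem_range.1 this
  have hXl : ∀ b : XI n, ∃ w, dd hloc n w = z • L.Xf b := by
    intro b
    have : z • L.Xf b ∈ LinearMap.ker (BB hloc n) := LinearMap.mem_ker.2 (L.kXz b)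
    rw [← range_dd hloc n] at this
    exact LinearMap.mem_range.1 this
  have hZxl : ∀ a : ZI n, ∃ w, dd hloc n w = x • L.Zf a := by
    intro a
    have : x • L.Zf a ∈ LinearMap.ker (BB hloc n) := LinearMap.mem_ker.2 (L.kZx a)
    rw [← range_dd hloc n] at this
    exact LinearMap.mem_range.1 this
  -- the new families
  set Zf' : (ZI n ⊕ XI n) → (Fin (covn hloc (n+1)).k → A) :=
    Sum.elim (fun a => (hZl a).choose) (fun b => (hXl b).choose) with hZf'
  set Xf' : ZI n → (Fin (covn hloc (n+1)).k → A) := fun a => (hZxl a).choose with hXf'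
  have hdZ : ∀ t : ZI n ⊕ XI n,
      dd hloc n (Zf' t) = z • (Sum.elim L.Zf L.Xf t) := by
    rintro (a | b)
    · exact (hZl a).choose_spec
    · exact (hXl b).choose_spec
  have hdX : ∀ a : ZI n, dd hloc n (Xf' a) = x • L.Zf a := fun a => (hZxl a).choose_spec
  -- killing lemma: if dd kills, then BB (n+1) kills
  have hBB0 : ∀ q : Fin (covn hloc (n+1)).k → A, dd hloc n q = 0 → BB hloc (n+1) q = 0 := by
    intro q h
    apply Submodule.injective_subtype (LinearMap.ker (BB hloc n))
    exact h.trans (map_zero _).symm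
  refine ⟨Zf', Xf', ?_, ?_, ?_, ?_⟩
  · -- kZz
    intro t
    apply hBB0
    rw [map_smul, hdZ t, smul_smul, hzz, zero_smul]
  · -- kZx
    intro t
    apply hBB0
    rw [map_smul, hdZ t, smul_smul, hxz, zero_smul]
  · -- kXz
    intro a
    apply hBB0
    rw [map_smul, hdX a, smul_smul, hzx, zero_smul]
  · -- ind
    intro c e hS
    replace hS : (∑ t : ZI n ⊕ XI n, algebraMap F A (c t) • Zf' t
        + ∑ b : ZI n, algebraMap F A (e b) • Xf' b)
        ∈ radSMul A (Fin (covn hloc (n+1)).k → A) := hS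
    have h2 := dd_radSMul_mem_rad2 hloc n hS
    set r : (ZI n ⊕ XI n) → A := Sum.elim
      (fun a => algebraMap F A (c (Sum.inl a)) * z + algebraMap F A (e a) * x)
      (fun b => algebraMap F A (c (Sum.inr b)) * z) with hr
    have himg : dd hloc n (∑ t : ZI n ⊕ XI n, algebraMap F A (c t) • Zf' t
        + ∑ b : ZI n, algebraMap F A (e b) • Xf' b)
        = ∑ t : ZI n ⊕ XI n, r t • Sum.elim L.Zf L.Xf t := by
      rw [map_add, map_sum, map_sum]
      simp_rw [map_smul, hdZ, hdX]
      rw [Fintype.sum_sum_type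
        (f := fun t : ZI n ⊕ XI n => algebraMap F A (c t) • (z • Sum.elim L.Zf L.Xf t))]
      rw [Fintype.sum_sum_type
        (f := fun t : ZI n ⊕ XI n => r t • Sum.elim L.Zf L.Xf t)]
      simp only [Sum.elim_inl, Sum.elim_inr, hr, add_smul, mul_smul, Algebra.smul_def]
      rw [Finset.sum_add_distrib]
      abel
    rw [himg] at h2
    have hindC : ∀ cc : (ZI n ⊕ XI n) → F,
        (∑ t, algebraMap F A (cc t) • Sum.elim L.Zf L.Xf t)
          ∈ radSMul A (Fin (covn hloc n).k → A) → ∀ t, cc t = 0 := by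
      intro cc hcc
      rw [Fintype.sum_sum_type] at hcc
      simp only [Sum.elim_inl, Sum.elim_inr] at hcc
      have hLi := L.ind (fun a => cc (Sum.inl a)) (fun b => cc (Sum.inr b)) hcc
      rintro (a | b)
      · exact hLi.1 a
      · exact hLi.2 b
    have hkey := keyL hloc (Sum.elim L.Zf L.Xf) hindC r h2
    have hall : (∀ t : ZI n ⊕ XI n, c t = 0) ∧ (∀ b : ZI n, e b = 0) := by
      have hz2 : ∀ a : ZI n, e a = 0 ∧ c (Sum.inl a) = 0 := by
        intro a
        have h3 := hkey (Sum.inl a)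
        rw [hr] at h3
        simp only [Sum.elim_inl] at h3
        rw [← Algebra.smul_def, ← Algebra.smul_def, add_comm] at h3
        exact hindep (e a) (c (Sum.inl a)) h3
      have hz3 : ∀ b : XI n, c (Sum.inr b) = 0 := by
        intro b
        have h3 := hkey (Sum.inr b)
        rw [hr] at h3
        simp only [Sum.elim_inr] at h3
        rw [← Algebra.smul_def] at h3
        exact (hindep 0 (c (Sum.inr b)) (by rwa [zero_smul, zero_add])).2
      refine ⟨?_, fun b => (hz2 b).1⟩
      rintro (a | b)
      · exact (hz2 a).2
      · exact hz3 b
    exact ⟨fun i => hall.1 i, fun b => hall.2 b⟩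

noncomputable def levels
    (hindep : ∀ c₁ c₂ : F, c₁ • x + c₂ • z ∈
      (Submodule.restrictScalars F (Ideal.jacobson (⊥ : Ideal A))) ^ 2 → c₁ = 0 ∧ c₂ = 0)
    (hxz : x * z = 0) (hzx : z * x = 0) (hzz : z * z = 0) :
    ∀ n, Level hloc x z n := fun n =>
  Nat.rec (level0 hloc x z hx hz)
    (fun _ L => levelStep hloc x z hindep hxz hzx hzz L) n


theorem level_ind_sum {n : ℕ} (L : Level hloc x z n) :
    ∀ cc : (ZI n ⊕ XI n) → F,
      (∑ t, algebraMap F A (cc t) • Sum.elim L.Zf L.Xf t)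
        ∈ radSMul A (Fin (covn hloc n).k → A) → ∀ t, cc t = 0 := by
  intro cc hcc
  rw [Fintype.sum_sum_type] at hcc
  simp only [Sum.elim_inl, Sum.elim_inr] at hcc
  have hLi := L.ind (fun a => cc (Sum.inl a)) (fun b => cc (Sum.inr b)) hcc
  rintro (a | b)
  · exact hLi.1 a
  · exact hLi.2 b

/-- the resolution -/
noncomputable def theRes : MinProjRes A where
  P n := Fin (covn hloc n).k → A
  acg := fun _ => inferInstance
  mod := fun _ => inferInstance
  proj := fun _ => inferInstance
  fg := fun _ => inferInstance
  ε := BB hloc 0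
  d n := dd hloc n
  surj := (covn hloc 0).surj
  exact_zero := range_dd hloc 0
  exact n := by rw [range_dd hloc (n+1), ker_dd hloc n]
  min_zero := ker_BB_le hloc 0
  minimal n := by rw [ker_dd hloc n]; exact ker_BB_le hloc (n+1)

theorem card_bound {n : ℕ} (L : Level hloc x z n)
    (g : Finset (Fin (covn hloc n).k → A))
    (hg : Submodule.span A (g : Set (Fin (covn hloc n).k → A)) = ⊤) :
    Nat.fib (n + 2) ≤ g.card := by
  classical
  set W : Submodule F (Fin (covn hloc n).k → A) :=
    Submodule.restrictScalars F (radSMul A (Fin (covn hloc n).k → A)) with hW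
  set E : (ZI n ⊕ XI n) → (Fin (covn hloc n).k → A) := Sum.elim L.Zf L.Xf with hE
  -- linear independence of the classes of E in P/W
  have li : LinearIndependent F (fun t => W.mkQ (E t)) := by
    rw [Fintype.linearIndependent_iff]
    intro cc hcc
    have hmem : (∑ t, algebraMap F A (cc t) • E t)
        ∈ radSMul A (Fin (covn hloc n).k → A) := by
      have h1 : W.mkQ (∑ t, cc t • E t) = 0 := by
        rw [map_sum]
        simpa [map_smul] using hcc
      have h2 : (∑ t, cc t • E t) ∈ W := by
        rwa [← Submodule.Quotient.mk_eq_zero W]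
      have h3 : (∑ t, algebraMap F A (cc t) • E t) = ∑ t, cc t • E t := by
        refine Finset.sum_congr rfl fun t _ => ?_
        rw [algebraMap_smul]
      rw [h3]
      exact h2
    exact level_ind_sum hloc x z L cc hmem
  -- spanning of the classes of g
  have hQspan : Submodule.span F (W.mkQ '' (g : Set (Fin (covn hloc n).k → A))) = ⊤ := by
    rw [eq_top_iff]
    rintro q -
    obtain ⟨p, rfl⟩ := Submodule.mkQ_surjective W q
    have hp : p ∈ Submodule.span A (g : Set (Fin (covn hloc n).k → A)) := by
      rw [hg]; trivial
    induction hp using Submodule.span_induction with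
    | mem w hw => exact Submodule.subset_span ⟨w, hw, rfl⟩
    | zero => rw [map_zero]; exact zero_mem _
    | add p q _ _ h1 h2 => rw [map_add]; exact add_mem h1 h2
    | smul a p _ hIH =>
      obtain ⟨c, hc⟩ := hloc a
      have hsplit : a • p = algebraMap F A c • p + (a - algebraMap F A c) • p := by
        rw [← add_smul, add_sub_cancel]
      rw [hsplit, map_add]
      refine add_mem ?_ ?_
      · rw [algebraMap_smul, map_smul]
        exact Submodule.smul_mem _ _ hIH
      · have hmem2 : (a - algebraMap F A c) • p ∈ W := smul_mem_radSMul hc p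
        have h0 : Submodule.Quotient.mk ((a - algebraMap F A c) • p)
            = (0 : (Fin (covn hloc n).k → A) ⧸ W) :=
          (Submodule.Quotient.mk_eq_zero W).2 hmem2
        rw [← Submodule.mkQ_apply W] at h0
        rw [h0]
        exact zero_mem _
  haveI hfinQ : Module.Finite F ((Fin (covn hloc n).k → A) ⧸ W) :=
    ⟨⟨g.image (W.mkQ), by rw [Finset.coe_image]; exact hQspan⟩⟩
  have h1 : Fintype.card (ZI n ⊕ XI n) ≤ finrank F ((Fin (covn hloc n).k → A) ⧸ W) :=
    li.fintype_card_le_finrank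
  have h2 : finrank F ((Fin (covn hloc n).k → A) ⧸ W) ≤ g.card := by
    set f := piMap (R := F) (fun (w : {a // a ∈ g}) => W.mkQ ↑w) with hf
    have hsurj : Function.Surjective f := by
      intro q
      have hq : q ∈ Submodule.span F (Set.range (fun (w : {a // a ∈ g}) => W.mkQ ↑w)) := by
        have himg : Set.range (fun (w : {a // a ∈ g}) => W.mkQ ↑w)
            = W.mkQ '' (g : Set (Fin (covn hloc n).k → A)) := by
          ext q'
          constructor
          · rintro ⟨w, rfl⟩
            exact ⟨↑w, w.2, rfl⟩
          · rintro ⟨p, hp, rfl⟩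
            exact ⟨⟨p, hp⟩, rfl⟩
        rw [himg, hQspan]
        trivial
      obtain ⟨c, hc⟩ := (Submodule.mem_span_range_iff_exists_fun F).1 hq
      exact ⟨c, hc⟩
    have hr : LinearMap.range f = ⊤ := LinearMap.range_eq_top.2 hsurj
    have h3 : finrank F ↥(LinearMap.range f) ≤ finrank F ({a // a ∈ g} → F) :=
      LinearMap.finrank_range_le f
    rw [hr, finrank_top, Module.finrank_fintype_fun_eq_card, Fintype.card_coe] at h3
    exact h3
  have h4 : Fintype.card (ZI n ⊕ XI n) = Nat.fib (n + 2) := by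
    rw [Fintype.card_sum, (card_ZXI n).1, (card_ZXI n).2, Nat.fib_add_two]
    omega
  omega

theorem fdim_bound {n : ℕ} (L : Level hloc x z n) :
    Nat.fib (n + 2) ≤ fdim F A (Fin (covn hloc n).k → A) := by
  have hMeq : (Module.compHom (Fin (covn hloc n).k → A) (algebraMap F A))
      = (inferInstance : Module F (Fin (covn hloc n).k → A)) := by
    refine Module.ext' _ _ fun c m => ?_
    exact (algebraMap_smul A c m)
  rw [fdim, hMeq]
  set E : (ZI n ⊕ XI n) → (Fin (covn hloc n).k → A) := Sum.elim L.Zf L.Xf with hE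
  have li : LinearIndependent F E := by
    rw [Fintype.linearIndependent_iff]
    intro cc hcc
    have hmem : (∑ t, algebraMap F A (cc t) • E t)
        ∈ radSMul A (Fin (covn hloc n).k → A) := by
      have h3 : (∑ t, algebraMap F A (cc t) • E t) = ∑ t, cc t • E t := by
        refine Finset.sum_congr rfl fun t _ => ?_
        rw [algebraMap_smul]
      rw [h3, hcc]
      exact zero_mem _
    exact level_ind_sum hloc x z L cc hmem
  have h1 : Fintype.card (ZI n ⊕ XI n) ≤ finrank F (Fin (covn hloc n).k → A) :=
    li.fintype_card_le_finrank
  have h4 : Fintype.card (ZI n ⊕ XI n) = Nat.fib (n + 2) := by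
    rw [Fintype.card_sum, (card_ZXI n).1, (card_ZXI n).2, Nat.fib_add_two]
    omega
  omega

theorem fib_lower : ∀ m : ℕ, 2 ^ m ≤ Nat.fib (2 * m + 2)
  | 0 => by simp
  | m + 1 => by
    have ih := fib_lower m
    have h1 : 2 * (m + 1) + 2 = (2 * m + 2) + 2 := by ring
    rw [h1, Nat.fib_add_two]
    have hmono : Nat.fib (2 * m + 2) ≤ Nat.fib (2 * m + 2 + 1) := Nat.fib_mono (by omega)
    have : 2 ^ (m + 1) = 2 ^ m + 2 ^ m := by ring
    omega

end Levels
end InfCx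

open InfCx

/-- If A is a local F-algebra and x, z ∈ J(A) are linearly independent modulo J(A)²
with xz = zx = z² = 0, then there is a minimal projective resolution of the trivial
A-module in which `P i` needs at least `f i` generators, where `f` is the shifted
Fibonacci sequence (f i = fib (i+2)). In particular the trivial A-module has infinite
complexity. -/
theorem trivial_module_infinite_complexity
    (F A : Type) [Field F] [Ring A] [Algebra F A] [FiniteDimensional F A]
    (hloc : ∀ a : A, ∃ c : F, a - algebraMap F A c ∈ Ideal.jacobson (⊥ : Ideal A))
    (x z : A)
    (hx : x ∈ Ideal.jacobson (⊥ : Ideal A)) (hz : z ∈ Ideal.jacobson (⊥ : Ideal A))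
    (hindep : ∀ c₁ c₂ : F, c₁ • x + c₂ • z ∈
      (Submodule.restrictScalars F (Ideal.jacobson (⊥ : Ideal A))) ^ 2 → c₁ = 0 ∧ c₂ = 0)
    (hxz : x * z = 0) (hzx : z * x = 0) (hzz : z * z = 0) :
    ∃ R : MinProjRes A,
      (∀ i : ℕ, ∀ g : Finset (R.P i),
          Submodule.span A (g : Set (R.P i)) = ⊤ → Nat.fib (i + 2) ≤ g.card) ∧
      ¬ ∃ c : ℕ, ∃ lam : ℝ, ∃ N : ℕ, ∀ n ≥ N,
          (fdim F A (R.P n) : ℝ) ≤ lam * (n : ℝ) ^ (c - 1) := by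
  haveI hnt : Nontrivial A := by
    rcases subsingleton_or_nontrivial A with hs | h
    · exfalso
      have h0 := hindep 1 0 (by
        rw [Subsingleton.elim ((1:F) • x + (0:F) • z) (0:A)]
        exact zero_mem _)
      exact one_ne_zero h0.1
    · exact h
  refine ⟨theRes hloc, ?_, ?_⟩
  · intro i g hg
    exact card_bound hloc x z (levels hloc x z hx hz hindep hxz hzx hzz i) g hg
  · rintro ⟨c, lam, N, hN⟩
    have key : ∀ n, N ≤ n → (Nat.fib (n + 2) : ℝ) ≤ lam * (n : ℝ) ^ (c - 1) := by
      intro n hn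
      have h1 := fdim_bound hloc x z (levels hloc x z hx hz hindep hxz hzx hzz n)
      have h2 := hN n hn
      have h3 : fdim F A ((theRes hloc).P n) = fdim F A (Fin (covn hloc n).k → A) := rfl
      rw [h3] at h2
      calc (Nat.fib (n + 2) : ℝ) ≤ (fdim F A (Fin (covn hloc n).k → A) : ℝ) := by
            exact_mod_cast h1
        _ ≤ lam * (n : ℝ) ^ (c - 1) := h2
    have hlo := Asymptotics.isLittleO_iff.1
      (isLittleO_pow_const_const_pow_of_one_lt (R := ℝ) (c - 1) one_lt_two)
    have hCpos : (0:ℝ) < |lam| * 2 ^ (c - 1) + 1 := by positivity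
    set Cc : ℝ := |lam| * 2 ^ (c - 1) + 1 with hCc
    have hε : (0:ℝ) < 1 / (2 * Cc) := by positivity
    have hev := hlo hε
    rw [Filter.eventually_atTop] at hev
    obtain ⟨M0, hM0⟩ := hev
    set m := max (max N 1) M0 with hm
    have hmN : N ≤ m := le_trans (le_max_left _ _) (le_max_left _ _)
    have hmM : M0 ≤ m := le_max_right _ _
    have hfib : (2:ℝ) ^ m ≤ (Nat.fib (2 * m + 2) : ℝ) := by exact_mod_cast fib_lower m
    have hkey2 := key (2 * m) (by omega)
    have hcast : ((2 * m : ℕ) : ℝ) = 2 * (m : ℝ) := by push_cast; ring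
    rw [hcast] at hkey2
    have hnorm := hM0 m hmM
    rw [Real.norm_eq_abs, Real.norm_eq_abs, abs_of_nonneg (by positivity),
      abs_of_nonneg (by positivity)] at hnorm
    have hup : lam * (2 * (m:ℝ)) ^ (c - 1) ≤ Cc * ((m:ℝ)) ^ (c - 1) := by
      have h5 : (2 * (m:ℝ)) ^ (c - 1) = 2 ^ (c - 1) * (m:ℝ) ^ (c - 1) := by rw [mul_pow]
      rw [h5, ← mul_assoc]
      apply mul_le_mul_of_nonneg_right ?_ (by positivity)
      have h6 : lam * 2 ^ (c - 1) ≤ |lam| * 2 ^ (c - 1) :=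
        mul_le_mul_of_nonneg_right (le_abs_self lam) (by positivity)
      rw [hCc]
      linarith
    have final : (2:ℝ) ^ m ≤ Cc * ((m:ℝ)) ^ (c - 1) := le_trans (le_trans hfib hkey2) hup
    have final2 : Cc * ((m:ℝ)) ^ (c - 1) ≤ Cc * (1 / (2 * Cc) * 2 ^ m) :=
      mul_le_mul_of_nonneg_left hnorm (le_of_lt hCpos)
    have hhalf : Cc * (1 / (2 * Cc) * 2 ^ m) = 2 ^ m / 2 := by
      field_simp
    have h2pos : (0:ℝ) < 2 ^ m := by positivity
    rw [hhalf] at final2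
    have hcontr : (2:ℝ) ^ m ≤ 2 ^ m / 2 := le_trans final final2
    linarith
end

section
/- Let A be a finite-dimensional symmetric F-algebra with symmetrizing form s, soc(A) one-dimensional over F, and set soc^2(A) = {a ∈ A : a·J(A)^2 = 0}. Then for any a ∈ soc^2(A) and b ∈ J(A), both ab and ba lie in soc(A), and ab = ba. -/
open Module

section Aux

set_option linter.unusedSectionVars false

variable {F A : Type*} [Field F] [Ring A] [Algebra F A] [FiniteDimensional F A]
  (s : A →ₗ[F] F) (hs : ∀ a b : A, s (a * b) = s (b * a))
  (hnd : ∀ a : A, (∀ b : A, s (a * b) = 0) → a = 0)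

lemma mem_jrad_iff (x : A) : x ∈ jrad F A ↔ x ∈ Ideal.jacobson (⊥ : Ideal A) := Iff.rfl

lemma jrad_mul_mem_right {x : A} (y : A) (hx : x ∈ jrad F A) : x * y ∈ jrad F A :=
  (Ideal.jacobson (⊥ : Ideal A)).mul_mem_right y hx

/-- The map `a ↦ (x ↦ s (x * a))`. -/
noncomputable def phiR : A →ₗ[F] Module.Dual F A :=
  ((LinearMap.mul F A).flip).compr₂ s

lemma phiR_apply (a x : A) : phiR s a x = s (x * a) := rfl

include hs hnd in
lemma phiR_bij : Function.Bijective (phiR s) := by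
  have hinj : Function.Injective (phiR s) := by
    rw [← LinearMap.ker_eq_bot, LinearMap.ker_eq_bot']
    intro a ha
    apply hnd
    intro b
    rw [hs a b, ← phiR_apply s a b, ha]
    rfl
  refine ⟨hinj, ?_⟩
  have := Subspace.dual_finrank_eq (K := F) (V := A)
  exact (LinearMap.injective_iff_surjective_of_finrank_eq_finrank this.symm).mp hinj

include hs hnd in
/-- In a symmetric algebra, `J * socl = 0`. -/
lemma jrad_mul_socl (b x : A) (hb : b ∈ jrad F A) (hx : x ∈ socl F A) : b * x = 0 := by
  apply hnd
  intro y
  have h1 : x * (y * b) = 0 := hx _ (Ideal.mul_mem_left _ y hb)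
  rw [mul_assoc, hs, mul_assoc, h1, map_zero]

include hs hnd in
/-- socl is exactly the preimage of the dual annihilator of J under `phiR`. -/
lemma phiR_mem_dualAnnihilator (a : A) :
    phiR s a ∈ (jrad F A).dualAnnihilator ↔ a ∈ socl F A := by
  rw [Submodule.mem_dualAnnihilator]
  constructor
  · intro h
    have hra : ∀ c ∈ jrad F A, c * a = 0 := by
      intro c hc
      apply hnd
      intro y
      have hyc : y * c ∈ jrad F A := Ideal.mul_mem_left _ y hc
      rw [hs, ← mul_assoc]
      exact h _ hyc
    intro c hc
    apply hnd
    intro y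
    have hcy : c * y ∈ jrad F A := jrad_mul_mem_right y hc
    rw [mul_assoc, hs, hra _ hcy, map_zero]
  · intro h c hc
    rw [phiR_apply, hs, h c hc, map_zero]

include hs hnd in
lemma finrank_jrad_add_one (hsoc : finrank F (socl F A) = 1) :
    finrank F (jrad F A) + 1 = finrank F A := by
  have hbij := phiR_bij s hs hnd
  have hmap : (socl F A).map (phiR s) = (jrad F A).dualAnnihilator := by
    apply le_antisymm
    · rintro _ ⟨a, ha, rfl⟩
      exact (phiR_mem_dualAnnihilator s hs hnd a).mpr ha
    · intro g hg
      obtain ⟨a, rfl⟩ := hbij.2 g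
      exact ⟨a, (phiR_mem_dualAnnihilator s hs hnd a).mp hg, rfl⟩
  have h1 : finrank F (socl F A) = finrank F ((jrad F A).dualAnnihilator) := by
    rw [← hmap]
    exact LinearEquiv.finrank_eq (Submodule.equivMapOfInjective _ hbij.1 _)
  have h2 : finrank F (A ⧸ (jrad F A)) = finrank F ((jrad F A).dualAnnihilator) :=
    LinearEquiv.finrank_eq (Subspace.quotEquivAnnihilator (jrad F A))
  have h3 := Submodule.finrank_quotient_add_finrank (jrad F A)
  omega

include hs hnd in
/-- Every element of A is `c + λ • 1` with `c ∈ J`. -/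
lemma exists_decomp (hsoc : finrank F (socl F A) = 1) (x : A) :
    ∃ c ∈ jrad F A, ∃ l : F, x = c + l • 1 := by
  have hnt : Nontrivial A := by
    rcases subsingleton_or_nontrivial A with hsub | hnt
    · exfalso
      have : finrank F (socl F A) = 0 := by
        have : Subsingleton (socl F A) := by infer_instance
        exact Module.finrank_zero_of_subsingleton
      omega
    · exact hnt
  have hone : (1 : A) ∉ jrad F A := by
    intro h1
    obtain ⟨M, hM⟩ := Ideal.exists_maximal A
    have : (1 : A) ∈ M := by
      rw [mem_jrad_iff] at h1
      exact (Ideal.mem_sInf.mp h1) ⟨bot_le, hM⟩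
    exact hM.ne_top (Ideal.eq_top_of_isUnit_mem M this isUnit_one)
  have hinf : jrad F A ⊓ Submodule.span F {(1 : A)} = ⊥ := by
    rw [eq_bot_iff]
    rintro x ⟨hxJ, hxS⟩
    obtain ⟨l, rfl⟩ := Submodule.mem_span_singleton.mp hxS
    rcases eq_or_ne l 0 with rfl | hl
    · simp
    · exfalso
      apply hone
      have := (jrad F A).smul_mem l⁻¹ hxJ
      rwa [smul_smul, inv_mul_cancel₀ hl, one_smul] at this
  have hsup : jrad F A ⊔ Submodule.span F {(1 : A)} = ⊤ := by
    apply Submodule.eq_top_of_finrank_eq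
    have := Submodule.finrank_sup_add_finrank_inf_eq (jrad F A) (Submodule.span F {(1 : A)})
    rw [hinf, finrank_bot, add_zero, finrank_span_singleton (one_ne_zero)] at this
    rw [this, finrank_jrad_add_one s hs hnd hsoc]
  have hx : x ∈ jrad F A ⊔ Submodule.span F {(1 : A)} := hsup ▸ Submodule.mem_top
  obtain ⟨c, hc, y, hy, rfl⟩ := Submodule.mem_sup.mp hx
  obtain ⟨l, rfl⟩ := Submodule.mem_span_singleton.mp hy
  exact ⟨c, hc, l, rfl⟩

end Aux

/-- If A is a finite-dimensional symmetric F-algebra with one-dimensional socle, then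
for a ∈ soc²(A) and b ∈ J(A) we have ab, ba ∈ soc(A) and ab = ba. -/
theorem soc2_mul_jacobson
    (F A : Type*) [Field F] [Ring A] [Algebra F A] [FiniteDimensional F A]
    (s : A →ₗ[F] F) (hs : ∀ a b : A, s (a * b) = s (b * a))
    (hnd : ∀ a : A, (∀ b : A, s (a * b) = 0) → a = 0)
    (hsoc : finrank F (socl F A) = 1) :
    ∀ a : A, (∀ u ∈ jrad F A ^ 2, a * u = 0) →
      ∀ b ∈ jrad F A, a * b ∈ socl F A ∧ b * a ∈ socl F A ∧ a * b = b * a := by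
  intro a ha b hb
  -- a * (anything in J) is in socl
  have key : ∀ c ∈ jrad F A, a * c ∈ socl F A := by
    intro c hc d hd
    rw [mul_assoc]
    exact ha _ (by rw [sq]; exact Submodule.mul_mem_mul hc hd)
  have hab : a * b ∈ socl F A := key b hb
  have hba : b * a ∈ socl F A := by
    intro c hc
    have hac : a * c ∈ socl F A := key c hc
    rw [mul_assoc]
    exact jrad_mul_socl s hs hnd b (a * c) hb hac
  refine ⟨hab, hba, ?_⟩
  have hd : a * b - b * a ∈ socl F A := Submodule.sub_mem _ hab hba
  have : a * b - b * a = 0 := by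
    apply hnd
    intro y
    obtain ⟨c, hc, l, rfl⟩ := exists_decomp s hs hnd hsoc y
    rw [mul_add]
    have h1 : (a * b - b * a) * c = 0 := hd c hc
    rw [h1, zero_add, mul_smul_comm, mul_one, map_smul, map_sub, hs, sub_self,
      smul_zero]
  exact sub_eq_zero.mp this
end

section
/- Let F be a field of characteristic 2 and let Z = F[X,Y,Z_1,…,Z_4]/⟨X^2+1, Y^2+1, (X+1)Z_i, (Y+1)Z_i, Z_iZ_j (1 ≤ i,j ≤ 4)⟩. Then Z is a local commutative F-algebra of dimension 8 with J(Z)^3 = 0 and J(Z)^2 ≠ 0; that is, Z has Loewy length 3. -/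
open MvPolynomial Module

/-- The inclusion of the four variables Z₁,…,Z₄ among the six variables X,Y,Z₁,…,Z₄. -/
def zvar (i : Fin 4) : Fin 6 := ⟨i.1 + 2, by omega⟩

/-- The relations X²+1, Y²+1, (X+1)Zᵢ, (Y+1)Zᵢ, ZᵢZⱼ (1 ≤ i,j ≤ 4). -/
noncomputable def relIdeal (F : Type*) [Field F] : Ideal (MvPolynomial (Fin 6) F) :=
  Ideal.span ({X 0 ^ 2 + 1, X 1 ^ 2 + 1} ∪
    {p | ∃ i : Fin 4, p = (X 0 + 1) * X (zvar i)} ∪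
    {p | ∃ i : Fin 4, p = (X 1 + 1) * X (zvar i)} ∪
    {p | ∃ i j : Fin 4, p = X (zvar i) * X (zvar j)})

/-- The algebra Z = F[X,Y,Z₁,…,Z₄]/⟨X²+1, Y²+1, (X+1)Zᵢ, (Y+1)Zᵢ, ZᵢZⱼ⟩. -/
def ZAlg (F : Type*) [Field F] : Type _ := MvPolynomial (Fin 6) F ⧸ relIdeal F

noncomputable instance (F : Type*) [Field F] : CommRing (ZAlg F) :=
  Ideal.Quotient.commRing _

noncomputable instance (F : Type*) [Field F] : Algebra F (ZAlg F) :=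
  Ideal.Quotient.algebra F

namespace ZAux

@[ext] structure Model (F : Type*) where
  (a0 a1 a2 a3 a4 a5 a6 a7 : F)

variable {F : Type*} [Field F]

namespace Model

instance : Zero (Model F) := ⟨⟨0,0,0,0,0,0,0,0⟩⟩
instance : One (Model F) := ⟨⟨1,0,0,0,0,0,0,0⟩⟩
instance : Add (Model F) := ⟨fun p q => ⟨p.a0+q.a0, p.a1+q.a1, p.a2+q.a2, p.a3+q.a3, p.a4+q.a4, p.a5+q.a5, p.a6+q.a6, p.a7+q.a7⟩⟩
instance : Neg (Model F) := ⟨fun p => ⟨-p.a0,-p.a1,-p.a2,-p.a3,-p.a4,-p.a5,-p.a6,-p.a7⟩⟩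
instance : Mul (Model F) := ⟨fun p q => ⟨p.a0*q.a0,
   p.a0*q.a1 + p.a1*q.a0,
   p.a0*q.a2 + p.a2*q.a0,
   p.a0*q.a3 + p.a1*q.a2 + p.a2*q.a1 + p.a3*q.a0,
   p.a0*q.a4 + p.a4*q.a0,
   p.a0*q.a5 + p.a5*q.a0,
   p.a0*q.a6 + p.a6*q.a0,
   p.a0*q.a7 + p.a7*q.a0⟩⟩
instance : SMul F (Model F) := ⟨fun c p => ⟨c*p.a0, c*p.a1, c*p.a2, c*p.a3, c*p.a4, c*p.a5, c*p.a6, c*p.a7⟩⟩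

@[simp] lemma zero_a0 : (0 : Model F).a0 = 0 := rfl
@[simp] lemma zero_a1 : (0 : Model F).a1 = 0 := rfl
@[simp] lemma zero_a2 : (0 : Model F).a2 = 0 := rfl
@[simp] lemma zero_a3 : (0 : Model F).a3 = 0 := rfl
@[simp] lemma zero_a4 : (0 : Model F).a4 = 0 := rfl
@[simp] lemma zero_a5 : (0 : Model F).a5 = 0 := rfl
@[simp] lemma zero_a6 : (0 : Model F).a6 = 0 := rfl
@[simp] lemma zero_a7 : (0 : Model F).a7 = 0 := rfl
@[simp] lemma one_a0 : (1 : Model F).a0 = 1 := rfl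
@[simp] lemma one_a1 : (1 : Model F).a1 = 0 := rfl
@[simp] lemma one_a2 : (1 : Model F).a2 = 0 := rfl
@[simp] lemma one_a3 : (1 : Model F).a3 = 0 := rfl
@[simp] lemma one_a4 : (1 : Model F).a4 = 0 := rfl
@[simp] lemma one_a5 : (1 : Model F).a5 = 0 := rfl
@[simp] lemma one_a6 : (1 : Model F).a6 = 0 := rfl
@[simp] lemma one_a7 : (1 : Model F).a7 = 0 := rfl
@[simp] lemma add_a0 (p q : Model F) : (p+q).a0 = p.a0+q.a0 := rfl
@[simp] lemma add_a1 (p q : Model F) : (p+q).a1 = p.a1+q.a1 := rfl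
@[simp] lemma add_a2 (p q : Model F) : (p+q).a2 = p.a2+q.a2 := rfl
@[simp] lemma add_a3 (p q : Model F) : (p+q).a3 = p.a3+q.a3 := rfl
@[simp] lemma add_a4 (p q : Model F) : (p+q).a4 = p.a4+q.a4 := rfl
@[simp] lemma add_a5 (p q : Model F) : (p+q).a5 = p.a5+q.a5 := rfl
@[simp] lemma add_a6 (p q : Model F) : (p+q).a6 = p.a6+q.a6 := rfl
@[simp] lemma add_a7 (p q : Model F) : (p+q).a7 = p.a7+q.a7 := rfl
@[simp] lemma neg_a0 (p : Model F) : (-p).a0 = -p.a0 := rfl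
@[simp] lemma neg_a1 (p : Model F) : (-p).a1 = -p.a1 := rfl
@[simp] lemma neg_a2 (p : Model F) : (-p).a2 = -p.a2 := rfl
@[simp] lemma neg_a3 (p : Model F) : (-p).a3 = -p.a3 := rfl
@[simp] lemma neg_a4 (p : Model F) : (-p).a4 = -p.a4 := rfl
@[simp] lemma neg_a5 (p : Model F) : (-p).a5 = -p.a5 := rfl
@[simp] lemma neg_a6 (p : Model F) : (-p).a6 = -p.a6 := rfl
@[simp] lemma neg_a7 (p : Model F) : (-p).a7 = -p.a7 := rfl
@[simp] lemma mul_a0 (p q : Model F) : (p*q).a0 = p.a0*q.a0 := rfl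
@[simp] lemma mul_a1 (p q : Model F) : (p*q).a1 = p.a0*q.a1 + p.a1*q.a0 := rfl
@[simp] lemma mul_a2 (p q : Model F) : (p*q).a2 = p.a0*q.a2 + p.a2*q.a0 := rfl
@[simp] lemma mul_a3 (p q : Model F) : (p*q).a3 = p.a0*q.a3 + p.a1*q.a2 + p.a2*q.a1 + p.a3*q.a0 := rfl
@[simp] lemma mul_a4 (p q : Model F) : (p*q).a4 = p.a0*q.a4 + p.a4*q.a0 := rfl
@[simp] lemma mul_a5 (p q : Model F) : (p*q).a5 = p.a0*q.a5 + p.a5*q.a0 := rfl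
@[simp] lemma mul_a6 (p q : Model F) : (p*q).a6 = p.a0*q.a6 + p.a6*q.a0 := rfl
@[simp] lemma mul_a7 (p q : Model F) : (p*q).a7 = p.a0*q.a7 + p.a7*q.a0 := rfl
@[simp] lemma smul_a0 (c : F) (p : Model F) : (c • p).a0 = c*p.a0 := rfl
@[simp] lemma smul_a1 (c : F) (p : Model F) : (c • p).a1 = c*p.a1 := rfl
@[simp] lemma smul_a2 (c : F) (p : Model F) : (c • p).a2 = c*p.a2 := rfl
@[simp] lemma smul_a3 (c : F) (p : Model F) : (c • p).a3 = c*p.a3 := rfl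
@[simp] lemma smul_a4 (c : F) (p : Model F) : (c • p).a4 = c*p.a4 := rfl
@[simp] lemma smul_a5 (c : F) (p : Model F) : (c • p).a5 = c*p.a5 := rfl
@[simp] lemma smul_a6 (c : F) (p : Model F) : (c • p).a6 = c*p.a6 := rfl
@[simp] lemma smul_a7 (c : F) (p : Model F) : (c • p).a7 = c*p.a7 := rfl

instance : AddCommGroup (Model F) where
  add_assoc p q r := by ext <;> simp <;> ring
  zero_add p := by ext <;> simp
  add_zero p := by ext <;> simp
  add_comm p q := by ext <;> simp <;> ring
  neg_add_cancel p := by ext <;> simp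
  nsmul := nsmulRec
  zsmul := zsmulRec

instance : CommRing (Model F) :=
  { (inferInstance : AddCommGroup (Model F)),
    (inferInstance : Mul (Model F)), (inferInstance : One (Model F)) with
    mul_assoc := fun p q r => by ext <;> simp <;> ring
    one_mul := fun p => by ext <;> simp
    mul_one := fun p => by ext <;> simp
    left_distrib := fun p q r => by ext <;> simp <;> ring
    right_distrib := fun p q r => by ext <;> simp <;> ring
    zero_mul := fun p => by ext <;> simp
    mul_zero := fun p => by ext <;> simp
    mul_comm := fun p q => by ext <;> simp <;> ring }

def cHom : F →+* Model F where
  toFun c := ⟨c,0,0,0,0,0,0,0⟩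
  map_one' := rfl
  map_mul' c d := by ext <;> simp
  map_zero' := rfl
  map_add' c d := by ext <;> simp

instance : Algebra F (Model F) where
  algebraMap := cHom
  commutes' c p := mul_comm _ _
  smul_def' c p := by ext <;> simp [cHom]

def toPi : Model F ≃ₗ[F] (Fin 8 → F) where
  toFun p := ![p.a0,p.a1,p.a2,p.a3,p.a4,p.a5,p.a6,p.a7]
  invFun f := ⟨f 0, f 1, f 2, f 3, f 4, f 5, f 6, f 7⟩
  map_add' p q := by funext i; fin_cases i <;> rfl
  map_smul' c p := by funext i; fin_cases i <;> rfl
  left_inv p := rfl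
  right_inv f := by funext i; fin_cases i <;> simp <;> rfl

lemma finrank_model : finrank F (Model F) = 8 := by
  rw [toPi.finrank_eq]
  simp

end Model

section Main

variable (F : Type*) [Field F] [CharP F 2]
set_option linter.unusedSectionVars false

local notation "P" => MvPolynomial (Fin 6) F

lemma two_P : (2 : P) = 0 := by
  have := CharP.cast_eq_zero P 2
  simpa using this

lemma two_F : (2 : F) = 0 := by
  have := CharP.cast_eq_zero F 2
  simpa using this

/-- generators of the augmentation ideal -/
noncomputable def G : Fin 6 → P
  | ⟨0, _⟩ => X 0 + 1
  | ⟨1, _⟩ => X 1 + 1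
  | ⟨k+2, h⟩ => X (zvar ⟨k, by omega⟩)

lemma mem1 : (X 0 ^ 2 + 1 : P) ∈ relIdeal F :=
  Ideal.subset_span (Or.inl (Or.inl (Or.inl (Or.inl rfl))))

lemma mem2 : (X 1 ^ 2 + 1 : P) ∈ relIdeal F :=
  Ideal.subset_span (Or.inl (Or.inl (Or.inl (Or.inr rfl))))

lemma memA (i : Fin 4) : ((X 0 + 1) * X (zvar i) : P) ∈ relIdeal F :=
  Ideal.subset_span (Or.inl (Or.inl (Or.inr ⟨i, rfl⟩)))

lemma memB (i : Fin 4) : ((X 1 + 1) * X (zvar i) : P) ∈ relIdeal F :=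
  Ideal.subset_span (Or.inl (Or.inr ⟨i, rfl⟩))

lemma memZZ (i j : Fin 4) : (X (zvar i) * X (zvar j) : P) ∈ relIdeal F :=
  Ideal.subset_span (Or.inr ⟨i, j, rfl⟩)

lemma memAA : ((X 0 + 1) * (X 0 + 1) : P) ∈ relIdeal F := by
  have e : ((X 0 + 1) * (X 0 + 1) : P) = X 0 ^ 2 + 1 := by
    linear_combination (X 0 : P) * two_P F
  rw [e]; exact mem1 F

lemma memBB : ((X 1 + 1) * (X 1 + 1) : P) ∈ relIdeal F := by
  have e : ((X 1 + 1) * (X 1 + 1) : P) = X 1 ^ 2 + 1 := by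
    linear_combination (X 1 : P) * two_P F
  rw [e]; exact mem2 F

lemma pair (i j : Fin 6) :
    G F i * G F j ∈ relIdeal F ∨ G F i * G F j = G F 0 * G F 1 := by
  match i, j with
  | ⟨0, _⟩, ⟨0, _⟩ => exact Or.inl (memAA F)
  | ⟨0, _⟩, ⟨1, _⟩ => exact Or.inr rfl
  | ⟨0, _⟩, ⟨k+2, h⟩ => exact Or.inl (memA F ⟨k, by omega⟩)
  | ⟨1, _⟩, ⟨0, _⟩ => exact Or.inr (mul_comm _ _)
  | ⟨1, _⟩, ⟨1, _⟩ => exact Or.inl (memBB F)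
  | ⟨1, _⟩, ⟨k+2, h⟩ => exact Or.inl (memB F ⟨k, by omega⟩)
  | ⟨k+2, h⟩, ⟨0, _⟩ => exact Or.inl (by rw [mul_comm]; exact memA F ⟨k, by omega⟩)
  | ⟨k+2, h⟩, ⟨1, _⟩ => exact Or.inl (by rw [mul_comm]; exact memB F ⟨k, by omega⟩)
  | ⟨k+2, h⟩, ⟨l+2, h'⟩ => exact Or.inl (memZZ F ⟨k, by omega⟩ ⟨l, by omega⟩)

lemma ab_mul (k : Fin 6) : G F 0 * G F 1 * G F k ∈ relIdeal F := by
  match k with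
  | ⟨0, _⟩ =>
    have e : G F 0 * G F 1 * G F ⟨0, by omega⟩ = (X 1 + 1) * (X 0 ^ 2 + 1) := by
      show (X 0 + 1) * (X 1 + 1) * (X 0 + 1) = _
      linear_combination ((X 0 : P) * (X 1 + 1)) * two_P F
    rw [e]; exact Ideal.mul_mem_left _ _ (mem1 F)
  | ⟨1, _⟩ =>
    have e : G F 0 * G F 1 * G F ⟨1, by omega⟩ = (X 0 + 1) * (X 1 ^ 2 + 1) := by
      show (X 0 + 1) * (X 1 + 1) * (X 1 + 1) = _
      linear_combination ((X 1 : P) * (X 0 + 1)) * two_P F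
    rw [e]; exact Ideal.mul_mem_left _ _ (mem2 F)
  | ⟨k+2, h⟩ =>
    have e : G F 0 * G F 1 * G F ⟨k+2, h⟩
        = (X 0 + 1) * ((X 1 + 1) * X (zvar ⟨k, by omega⟩)) := by
      show (X 0 + 1) * (X 1 + 1) * X (zvar ⟨k, by omega⟩) = _
      ring
    rw [e]; exact Ideal.mul_mem_left _ _ (memB F ⟨k, by omega⟩)

lemma triple (i j k : Fin 6) : G F i * G F j * G F k ∈ relIdeal F := by
  rcases pair F i j with h | h
  · exact Ideal.mul_mem_right _ _ h
  · rw [h]; exact ab_mul F k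

noncomputable def Jgen : Ideal P := Ideal.span (Set.range (G F))

lemma step1 : ∀ i j : Fin 6, ∀ r ∈ Jgen F, G F i * G F j * r ∈ relIdeal F := by
  intro i j r hr
  induction hr using Submodule.span_induction with
  | mem x hx => obtain ⟨k, rfl⟩ := hx; exact triple F i j k
  | zero => simp
  | add x y _ _ hx hy => rw [mul_add]; exact add_mem hx hy
  | smul c x _ hx =>
      rw [smul_eq_mul]
      convert (relIdeal F).mul_mem_left c hx using 1
      ring

lemma step2 : ∀ i : Fin 6, ∀ q ∈ Jgen F, ∀ r ∈ Jgen F, G F i * q * r ∈ relIdeal F := by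
  intro i q hq r hr
  induction hq using Submodule.span_induction with
  | mem x hx => obtain ⟨j, rfl⟩ := hx; exact step1 F i j r hr
  | zero => simp
  | add x y _ _ hx hy => rw [mul_add, add_mul]; exact add_mem hx hy
  | smul c x _ hx =>
      rw [smul_eq_mul]
      convert (relIdeal F).mul_mem_left c hx using 1
      ring

lemma step3 : ∀ p ∈ Jgen F, ∀ q ∈ Jgen F, ∀ r ∈ Jgen F, p * q * r ∈ relIdeal F := by
  intro p hp q hq r hr
  induction hp using Submodule.span_induction with
  | mem x hx => obtain ⟨i, rfl⟩ := hx; exact step2 F i q hq r hr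
  | zero => simp
  | add x y _ _ hx hy => rw [add_mul, add_mul]; exact add_mem hx hy
  | smul c x _ hx =>
      rw [smul_eq_mul]
      convert (relIdeal F).mul_mem_left c hx using 1
      ring

lemma cube_le : Jgen F ^ 3 ≤ relIdeal F := by
  have h3 : (Jgen F) ^ 3 = Jgen F * Jgen F * Jgen F := by ring
  rw [h3]
  refine Ideal.mul_le.mpr fun r hr s hs => ?_
  refine Submodule.mul_induction_on hr (fun m hm n hn => step3 F m hm n hn s hs) ?_
  intro x y hx hy
  rw [add_mul]; exact add_mem hx hy

/-- evaluation point -/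
def w (F : Type*) [Field F] : Fin 6 → F := ![1, 1, 0, 0, 0, 0]

lemma Xsub_mem (i : Fin 6) : (X i - C (w F i) : P) ∈ Jgen F := by
  match i with
  | ⟨0, _⟩ =>
    have e : (X ⟨0, by omega⟩ - C (w F ⟨0, by omega⟩) : P) = G F 0 - 2 := by
      show (X 0 - C 1 : P) = (X 0 + 1) - 2
      rw [map_one]; ring
    rw [e, two_P F, sub_zero]
    exact Ideal.subset_span ⟨0, rfl⟩
  | ⟨1, _⟩ =>
    have e : (X ⟨1, by omega⟩ - C (w F ⟨1, by omega⟩) : P) = G F 1 - 2 := by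
      show (X 1 - C 1 : P) = (X 1 + 1) - 2
      rw [map_one]; ring
    rw [e, two_P F, sub_zero]
    exact Ideal.subset_span ⟨1, rfl⟩
  | ⟨k+2, h⟩ =>
    have hw : w F ⟨k+2, h⟩ = 0 := by
      have hk : k < 4 := by omega
      interval_cases k <;> rfl
    have e : (X ⟨k+2, h⟩ - C (w F ⟨k+2, h⟩) : P) = G F ⟨k+2, h⟩ := by
      rw [hw, map_zero, sub_zero]; rfl
    rw [e]
    exact Ideal.subset_span ⟨⟨k+2, h⟩, rfl⟩

lemma sub_eval_mem (p : P) : p - C (eval (w F) p) ∈ Jgen F := by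
  induction p using MvPolynomial.induction_on with
  | C c => simp
  | add p q hp hq =>
      have e : p + q - C (eval (w F) (p + q))
          = (p - C (eval (w F) p)) + (q - C (eval (w F) q)) := by
        rw [map_add, map_add]; ring
      rw [e]; exact add_mem hp hq
  | mul_X p i hp =>
      have e : p * X i - C (eval (w F) (p * X i))
          = (p - C (eval (w F) p)) * X i
            + C (eval (w F) p) * (X i - C (w F i)) := by
        rw [map_mul, map_mul, eval_X]; ring
      rw [e]
      exact add_mem (Ideal.mul_mem_right _ _ hp)
        (Ideal.mul_mem_left _ _ (Xsub_mem F i))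


/-- images of the six variables in the model algebra -/
noncomputable def v : Fin 6 → Model F
  | ⟨0, _⟩ => ⟨1,1,0,0,0,0,0,0⟩
  | ⟨1, _⟩ => ⟨1,0,1,0,0,0,0,0⟩
  | ⟨2, _⟩ => ⟨0,0,0,0,1,0,0,0⟩
  | ⟨3, _⟩ => ⟨0,0,0,0,0,1,0,0⟩
  | ⟨4, _⟩ => ⟨0,0,0,0,0,0,1,0⟩
  | ⟨5, _⟩ => ⟨0,0,0,0,0,0,0,1⟩

noncomputable def phi : P →ₐ[F] Model F := aeval (v F)

lemma phi_a : phi F (X 0 + 1) = ⟨0,1,0,0,0,0,0,0⟩ := by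
  rw [phi, map_add, aeval_X, map_one]
  show (⟨1,1,0,0,0,0,0,0⟩ : Model F) + 1 = _
  ext <;> simp
  linear_combination two_F F

lemma phi_b : phi F (X 1 + 1) = ⟨0,0,1,0,0,0,0,0⟩ := by
  rw [phi, map_add, aeval_X, map_one]
  show (⟨1,0,1,0,0,0,0,0⟩ : Model F) + 1 = _
  ext <;> simp
  linear_combination two_F F

lemma phi_z (i : Fin 4) : phi F (X (zvar i)) = v F (zvar i) := by
  rw [phi, aeval_X]

lemma phi_ker : relIdeal F ≤ RingHom.ker (phi F) := by
  rw [relIdeal, Ideal.span_le]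
  rintro p ((((rfl | rfl) | ⟨i, rfl⟩) | ⟨i, rfl⟩) | ⟨i, ⟨j, rfl⟩⟩)
  · have e : (X 0 ^ 2 + 1 : P) = (X 0 + 1) * (X 0 + 1) := by
      linear_combination (-(X 0 : P)) * two_P F
    simp only [SetLike.mem_coe, RingHom.mem_ker, e, map_mul, phi_a]
    ext <;> simp
  · have e : (X 1 ^ 2 + 1 : P) = (X 1 + 1) * (X 1 + 1) := by
      linear_combination (-(X 1 : P)) * two_P F
    simp only [SetLike.mem_coe, RingHom.mem_ker, e, map_mul, phi_b]
    ext <;> simp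
  · simp only [SetLike.mem_coe, RingHom.mem_ker, map_mul, phi_a, phi_z]
    fin_cases i <;> (ext <;> simp [v, zvar])
  · simp only [SetLike.mem_coe, RingHom.mem_ker, map_mul, phi_b, phi_z]
    fin_cases i <;> (ext <;> simp [v, zvar])
  · simp only [SetLike.mem_coe, RingHom.mem_ker, map_mul, phi_z]
    fin_cases i <;> fin_cases j <;> (ext <;> simp [v, zvar])


lemma phi_C (c : F) : phi F (C c) = ⟨c,0,0,0,0,0,0,0⟩ := by
  rw [phi, aeval_C]; rfl

lemma phi_surj : Function.Surjective (phi F) := by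
  intro m
  refine ⟨C m.a0 + C m.a1 * (X 0 + 1) + C m.a2 * (X 1 + 1)
    + C m.a3 * ((X 0 + 1) * (X 1 + 1))
    + C m.a4 * X (zvar 0) + C m.a5 * X (zvar 1)
    + C m.a6 * X (zvar 2) + C m.a7 * X (zvar 3), ?_⟩
  have hz0 : phi F (X (zvar 0)) = ⟨0,0,0,0,1,0,0,0⟩ := by rw [phi, aeval_X]; rfl
  have hz1 : phi F (X (zvar 1)) = ⟨0,0,0,0,0,1,0,0⟩ := by rw [phi, aeval_X]; rfl
  have hz2 : phi F (X (zvar 2)) = ⟨0,0,0,0,0,0,1,0⟩ := by rw [phi, aeval_X]; rfl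
  have hz3 : phi F (X (zvar 3)) = ⟨0,0,0,0,0,0,0,1⟩ := by rw [phi, aeval_X]; rfl
  have ha' : (phi F) (X 0) + 1 = (⟨0,1,0,0,0,0,0,0⟩ : Model F) := by
    have := phi_a F; rwa [map_add, map_one] at this
  have hb' : (phi F) (X 1) + 1 = (⟨0,0,1,0,0,0,0,0⟩ : Model F) := by
    have := phi_b F; rwa [map_add, map_one] at this
  simp only [map_add, map_mul, map_one, phi_C, hz0, hz1, hz2, hz3, ha', hb']
  ext <;> simp <;> ring

/-- the candidate spanning monomials -/
noncomputable def Bv : Fin 8 → P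
  | ⟨0, _⟩ => 1
  | ⟨1, _⟩ => X 0 + 1
  | ⟨2, _⟩ => X 1 + 1
  | ⟨3, _⟩ => (X 0 + 1) * (X 1 + 1)
  | ⟨k+4, h⟩ => X (zvar ⟨k, by omega⟩)

noncomputable def T : Submodule F P :=
  Submodule.span F (Set.range (Bv F)) ⊔ Submodule.restrictScalars F (relIdeal F)

lemma TmemS (k : Fin 8) {x : P} (h : x = Bv F k) : x ∈ T F :=
  h ▸ Submodule.mem_sup_left (Submodule.subset_span ⟨k, rfl⟩)

lemma TmemI {x : P} (h : x ∈ relIdeal F) : x ∈ T F :=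
  Submodule.mem_sup_right h

lemma mulGen (k : Fin 8) (i : Fin 6) : Bv F k * G F i ∈ T F := by
  match k, i with
  | ⟨0, h⟩, ⟨0, h'⟩ => exact TmemS F 1 (one_mul _)
  | ⟨0, h⟩, ⟨1, h'⟩ => exact TmemS F 2 (one_mul _)
  | ⟨0, h⟩, ⟨j+2, h'⟩ => exact TmemS F ⟨j+4, by omega⟩ (one_mul _)
  | ⟨1, h⟩, ⟨0, h'⟩ => exact TmemI F (memAA F)
  | ⟨1, h⟩, ⟨1, h'⟩ => exact TmemS F 3 rfl
  | ⟨1, h⟩, ⟨j+2, h'⟩ => exact TmemI F (memA F ⟨j, by omega⟩)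
  | ⟨2, h⟩, ⟨0, h'⟩ => exact TmemS F 3 (mul_comm _ _)
  | ⟨2, h⟩, ⟨1, h'⟩ => exact TmemI F (memBB F)
  | ⟨2, h⟩, ⟨j+2, h'⟩ => exact TmemI F (memB F ⟨j, by omega⟩)
  | ⟨3, h⟩, i => exact TmemI F (ab_mul F i)
  | ⟨k+4, h⟩, ⟨0, h'⟩ =>
      exact TmemI F (by rw [mul_comm]; exact memA F ⟨k, by omega⟩)
  | ⟨k+4, h⟩, ⟨1, h'⟩ =>
      exact TmemI F (by rw [mul_comm]; exact memB F ⟨k, by omega⟩)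
  | ⟨k+4, h⟩, ⟨j+2, h'⟩ => exact TmemI F (memZZ F ⟨k, by omega⟩ ⟨j, by omega⟩)

lemma mulG (t : P) (ht : t ∈ T F) (i : Fin 6) : t * G F i ∈ T F := by
  rcases Submodule.mem_sup.mp ht with ⟨s, hs, r, hr, rfl⟩
  rw [add_mul]
  refine add_mem ?_ (TmemI F (Ideal.mul_mem_right _ _ hr))
  clear ht
  induction hs using Submodule.span_induction with
  | mem x hx => obtain ⟨k, rfl⟩ := hx; exact mulGen F k i
  | zero => rw [zero_mul]; exact zero_mem _
  | add x y _ _ hx hy => rw [add_mul]; exact add_mem hx hy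
  | smul c x _ hx => rw [smul_mul_assoc]; exact Submodule.smul_mem _ _ hx

lemma mulX (t : P) (ht : t ∈ T F) (i : Fin 6) : t * X i ∈ T F := by
  match i with
  | ⟨0, h⟩ =>
      have e : t * X ⟨0, h⟩ = t * G F ⟨0, h⟩ - t := by
        show t * X 0 = t * (X 0 + 1) - t; ring
      rw [e]; exact sub_mem (mulG F t ht _) ht
  | ⟨1, h⟩ =>
      have e : t * X ⟨1, h⟩ = t * G F ⟨1, h⟩ - t := by
        show t * X 1 = t * (X 1 + 1) - t; ring
      rw [e]; exact sub_mem (mulG F t ht _) ht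
  | ⟨k+2, h⟩ => exact mulG F t ht ⟨k+2, h⟩

lemma T_top : T F = ⊤ := by
  rw [eq_top_iff]
  rintro p -
  induction p using MvPolynomial.induction_on with
  | C c =>
      have e : (C c : P) = c • Bv F 0 := by
        rw [show Bv F 0 = (1 : P) from rfl, smul_eq_C_mul, mul_one]
      rw [e]; exact Submodule.smul_mem _ _ (TmemS F 0 rfl)
  | add p q hp hq => exact add_mem hp hq
  | mul_X p i hp => exact mulX F p hp i


noncomputable def phibar : ZAlg F →ₐ[F] Model F :=
  Ideal.Quotient.liftₐ (relIdeal F) (phi F) (fun a ha => phi_ker F ha)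

lemma phibar_mk (p : P) : phibar F (Ideal.Quotient.mk (relIdeal F) p) = phi F p := rfl

lemma phibar_surj : Function.Surjective (phibar F) := by
  intro m
  obtain ⟨p, hp⟩ := phi_surj F m
  exact ⟨Ideal.Quotient.mk (relIdeal F) p, by rw [phibar_mk, hp]⟩

lemma quot_span :
    Submodule.span F (Set.range fun k => Ideal.Quotient.mk (relIdeal F) (Bv F k))
      = (⊤ : Submodule F (ZAlg F)) := by
  erw [eq_top_iff]
  rintro x -
  obtain ⟨p, rfl⟩ := Ideal.Quotient.mk_surjective x
  have hp : p ∈ T F := by rw [T_top F]; trivial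
  rcases Submodule.mem_sup.mp hp with ⟨s, hs, r, hr, rfl⟩
  rw [RingHom.map_add, Ideal.Quotient.eq_zero_iff_mem.mpr hr, add_zero]
  clear hp
  induction hs using Submodule.span_induction with
  | mem x hx =>
      obtain ⟨k, rfl⟩ := hx
      exact Submodule.subset_span ⟨k, rfl⟩
  | zero => rw [map_zero]; exact zero_mem _
  | add x y _ _ hx hy => rw [RingHom.map_add]; exact add_mem hx hy
  | smul c x _ hx =>
      have e : Ideal.Quotient.mk (relIdeal F) (c • x)
          = c • Ideal.Quotient.mk (relIdeal F) x :=
        map_smul (Ideal.Quotient.mkₐ F (relIdeal F)) c x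
      rw [e]; exact Submodule.smul_mem _ _ hx

lemma zalg_finite : Module.Finite F (ZAlg F) :=
  ⟨by rw [← quot_span F]; exact Submodule.fg_span (Set.finite_range _)⟩

lemma finrank_eq : finrank F (ZAlg F) = 8 := by
  haveI := zalg_finite F
  classical
  refine le_antisymm ?_ ?_
  · have hspan := finrank_span_le_card (R := F)
        (Set.range fun k => Ideal.Quotient.mk (relIdeal F) (Bv F k))
    erw [quot_span F, finrank_top] at hspan
    refine hspan.trans ?_
    rw [Set.toFinset_range]
    exact (Finset.card_image_le).trans (by simp)
  · have h1 : Module.rank F (Model F) ≤ Module.rank F (ZAlg F) :=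
      (phibar F).toLinearMap.rank_le_of_surjective (phibar_surj F)
    have h2 : finrank F (Model F) ≤ finrank F (ZAlg F) :=
      finrank_le_finrank_of_rank_le_rank (Cardinal.lift_le.mpr h1) (rank_lt_aleph0 F _)
    rwa [Model.finrank_model] at h2

lemma hzw (i : Fin 4) : w F (zvar i) = 0 := by fin_cases i <;> rfl

lemma eval_ker : ∀ a ∈ relIdeal F, eval (w F) a = 0 := by
  have h : relIdeal F ≤ RingHom.ker (eval (w F)) := by
    rw [relIdeal, Ideal.span_le]
    rintro p ((((rfl | rfl) | ⟨i, rfl⟩) | ⟨i, rfl⟩) | ⟨i, ⟨j, rfl⟩⟩)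
    · rw [SetLike.mem_coe, RingHom.mem_ker, map_add, map_pow, eval_X, map_one]
      show (1 : F) ^ 2 + 1 = 0
      linear_combination two_F F
    · rw [SetLike.mem_coe, RingHom.mem_ker, map_add, map_pow, eval_X, map_one]
      show (1 : F) ^ 2 + 1 = 0
      linear_combination two_F F
    · rw [SetLike.mem_coe, RingHom.mem_ker, map_mul, eval_X, hzw, mul_zero]
    · rw [SetLike.mem_coe, RingHom.mem_ker, map_mul, eval_X, hzw, mul_zero]
    · rw [SetLike.mem_coe, RingHom.mem_ker, map_mul, eval_X, hzw, zero_mul]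
  exact fun a ha => h ha

noncomputable def epsbar : ZAlg F →+* F :=
  Ideal.Quotient.lift (relIdeal F) (eval (w F)) (eval_ker F)

lemma epsbar_mk (p : P) : epsbar F (Ideal.Quotient.mk (relIdeal F) p) = eval (w F) p :=
  Ideal.Quotient.lift_mk _ _ _

lemma epsbar_surj : Function.Surjective (epsbar F) :=
  fun c => ⟨Ideal.Quotient.mk (relIdeal F) (C c), by rw [epsbar_mk]; exact eval_C _⟩

lemma JG_ker : Jgen F ≤ RingHom.ker (eval (w F)) := by
  rw [Jgen, Ideal.span_le]
  rintro x ⟨i, rfl⟩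
  match i with
  | ⟨0, h⟩ =>
      rw [SetLike.mem_coe, RingHom.mem_ker]
      show eval (w F) (X 0 + 1) = 0
      rw [map_add, eval_X, map_one]
      show (1 : F) + 1 = 0
      linear_combination two_F F
  | ⟨1, h⟩ =>
      rw [SetLike.mem_coe, RingHom.mem_ker]
      show eval (w F) (X 1 + 1) = 0
      rw [map_add, eval_X, map_one]
      show (1 : F) + 1 = 0
      linear_combination two_F F
  | ⟨k+2, h⟩ =>
      rw [SetLike.mem_coe, RingHom.mem_ker]
      show eval (w F) (X (zvar ⟨k, by omega⟩)) = 0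
      rw [eval_X, hzw]

noncomputable def Jq : Ideal (ZAlg F) := (Jgen F).map (Ideal.Quotient.mk (relIdeal F))

lemma ker_eq : RingHom.ker (epsbar F) = Jq F := by
  refine le_antisymm ?_ ?_
  · intro x hx
    obtain ⟨p, rfl⟩ := Ideal.Quotient.mk_surjective x
    erw [RingHom.mem_ker, epsbar_mk] at hx
    have h := sub_eval_mem F p
    rw [hx, map_zero, sub_zero] at h
    exact Ideal.mem_map_of_mem _ h
  · erw [Jq, Ideal.map_le_iff_le_comap]
    intro g hg
    have h0 := JG_ker F hg
    rw [RingHom.mem_ker] at h0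
    exact Ideal.mem_comap.mpr (RingHom.mem_ker.mpr ((epsbar_mk F g).trans h0))

lemma Jq_max : (Jq F).IsMaximal :=
  ker_eq F ▸ RingHom.ker_isMaximal_of_surjective _ (epsbar_surj F)

lemma Jq_cube : Jq F ^ 3 = ⊥ := by
  erw [eq_bot_iff, Jq, ← Ideal.map_pow]
  calc Ideal.map (Ideal.Quotient.mk (relIdeal F)) (Jgen F ^ 3)
      ≤ Ideal.map (Ideal.Quotient.mk (relIdeal F)) (relIdeal F) :=
        Ideal.map_mono (cube_le F)
    _ = ⊥ := Ideal.map_quotient_self _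

lemma zalg_local : IsLocalRing (ZAlg F) := by
  haveI : Nontrivial (ZAlg F) := (epsbar F).domain_nontrivial
  refine IsLocalRing.of_unique_max_ideal ⟨Jq F, Jq_max F, fun M hM => ?_⟩
  have hle : Jq F ≤ M := by
    intro x hx
    have h3 : x ^ 3 = 0 := by
      have := Ideal.pow_mem_pow hx 3
      rwa [Jq_cube, Ideal.mem_bot] at this
    exact hM.isPrime.mem_of_pow_mem 3 (h3 ▸ M.zero_mem)
  exact ((Jq_max F).eq_of_le hM.ne_top hle).symm

lemma jac_eq : Ideal.jacobson (⊥ : Ideal (ZAlg F)) = Jq F := by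
  haveI := zalg_local F
  rw [IsLocalRing.jacobson_eq_maximalIdeal ⊥ bot_ne_top]
  exact (IsLocalRing.eq_maximalIdeal (Jq_max F)).symm

lemma Jq_sq_ne : Jq F ^ 2 ≠ ⊥ := by
  intro h
  have h01 : Ideal.Quotient.mk (relIdeal F) (G F 0) * Ideal.Quotient.mk (relIdeal F) (G F 1)
      ∈ Jq F ^ 2 := by
    rw [pow_two]
    exact Ideal.mul_mem_mul
      (Ideal.mem_map_of_mem _ (Ideal.subset_span ⟨0, rfl⟩))
      (Ideal.mem_map_of_mem _ (Ideal.subset_span ⟨1, rfl⟩))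
  erw [h, Ideal.mem_bot, ← map_mul] at h01
  have hmem : G F 0 * G F 1 ∈ relIdeal F := Ideal.Quotient.eq_zero_iff_mem.mp h01
  have h0 : phi F (G F 0 * G F 1) = 0 := phi_ker F hmem
  have h1 : phi F (G F 0 * G F 1) = ⟨0,0,0,1,0,0,0,0⟩ := by
    rw [map_mul, show G F 0 = (X 0 + 1 : P) from rfl, show G F 1 = (X 1 + 1 : P) from rfl,
      phi_a, phi_b]
    ext <;> simp
  rw [h0] at h1
  exact one_ne_zero (congrArg Model.a3 h1).symm

end Main
end ZAux


/-- In characteristic 2, the algebra Z is local of dimension 8 with J(Z)³ = 0 and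
J(Z)² ≠ 0; i.e. Z has Loewy length 3. -/
theorem ZAlg_local_dim_eight_loewy_three (F : Type*) [Field F] [CharP F 2] :
    IsLocalRing (ZAlg F) ∧ finrank F (ZAlg F) = 8 ∧
      Ideal.jacobson (⊥ : Ideal (ZAlg F)) ^ 3 = ⊥ ∧
      Ideal.jacobson (⊥ : Ideal (ZAlg F)) ^ 2 ≠ ⊥ := by
  refine ⟨ZAux.zalg_local F, ZAux.finrank_eq F, ?_, ?_⟩
  · rw [ZAux.jac_eq F]; exact ZAux.Jq_cube F
  · rw [ZAux.jac_eq F]; exact ZAux.Jq_sq_ne F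
end

section
/- Let F be a field of characteristic 2 and A a local F-algebra. Suppose x, y ∈ J(A) and α ∈ F∖{0} satisfy xy ≡ yx + αx^2 (mod J(A)^3) and y^2 ∈ J(A)^3. Then for every m ∈ ℕ: x^{m+1} ≡ (1/α)·(x·x^{m-1}y − x^{m-1}y·x) (mod J(A)^{m+2}) and x^{2m}y ≡ (1/α)·(y·x^{2m-1}y − x^{2m-1}y·y) (mod J(A)^{2m+2}). In particular, x^n ∈ [A,A] + J(A)^{n+1} for all n ≥ 2. -/
open Module

section Helpers

variable {F A : Type*} [Field F] [Ring A] [Algebra F A]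

private lemma id_a (x y X : A) (α : F) (hα : α ≠ 0) (hc : x * X = X * x) :
    (X*x)*x - α⁻¹ • (x * (X*y) - (X*y)*x) =
      -(α⁻¹ • (X * (x*y - (y*x + α • (x*x))))) := by
  have h1 : α⁻¹ * α = 1 := inv_mul_cancel₀ hα
  rw [← mul_assoc x X y, hc]
  simp only [mul_sub, mul_add, sub_mul, add_mul, mul_smul_comm, smul_mul_assoc,
    smul_sub, smul_add, smul_smul, mul_assoc, neg_sub, neg_add, neg_neg]
  match_scalars <;> simp [h1]

private lemma id_succ (x y X d e : A) (c α : F)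
    (hd : y * X = X*y - c • (X*x) + d)
    (he : x*y - (y*x + α • (x*x)) = e) :
    y * (X*x) - ((X*x)*y - (c+α) • ((X*x)*x)) = d*x - X*e := by
  rw [← he, ← mul_assoc y X x, hd]
  simp only [sub_mul, add_mul, mul_sub, mul_add, smul_mul_assoc, mul_smul_comm,
    smul_sub, smul_add, mul_assoc, add_smul]
  module

private lemma id_b (x y X d : A) (c α : F)
    (hd : y * X = X*y - c • (X*x) + d) :
    (X*x)*y - α⁻¹ • (y*(X*y) - (X*y)*y) =
      (1 + α⁻¹ * c) • ((X*x)*y) - α⁻¹ • (d*y) := by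
  rw [← mul_assoc y X y, hd]
  simp only [sub_mul, add_mul, smul_mul_assoc, smul_sub, smul_add, smul_smul,
    mul_assoc, add_smul, one_smul, mul_smul_comm]
  module

end Helpers

/-- Congruences from Lemma 10 of the paper: powers of x are commutators modulo higher
radical powers. -/
theorem power_congruences
    (F A : Type*) [Field F] [Ring A] [Algebra F A] [FiniteDimensional F A] [CharP F 2]
    (hloc : ∀ a : A, ∃ c : F, a - algebraMap F A c ∈ Ideal.jacobson (⊥ : Ideal A))
    (x y : A) (hx : x ∈ jrad F A) (hy : y ∈ jrad F A)
    (α : F) (hα : α ≠ 0)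
    (hxy : x * y - (y * x + α • x ^ 2) ∈ jrad F A ^ 3)
    (hy2 : y ^ 2 ∈ jrad F A ^ 3) :
    (∀ m : ℕ, 1 ≤ m →
      x ^ (m + 1) - α⁻¹ • (x * (x ^ (m - 1) * y) - (x ^ (m - 1) * y) * x) ∈ jrad F A ^ (m + 2) ∧
      x ^ (2 * m) * y - α⁻¹ • (y * (x ^ (2 * m - 1) * y) - (x ^ (2 * m - 1) * y) * y)
        ∈ jrad F A ^ (2 * m + 2)) ∧
    (∀ n : ℕ, 2 ≤ n → x ^ n ∈ commSpan F A ⊔ jrad F A ^ (n + 1)) := by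
  have h2 : (2 : F) = 0 := by exact_mod_cast CharP.cast_eq_zero F 2
  rw [pow_two] at hxy
  -- key commutation congruence
  have comm_pow : ∀ k : ℕ,
      y * x ^ (k+1) - (x ^ (k+1) * y - (((k+1 : ℕ) : F) * α) • x ^ (k+2)) ∈ jrad F A ^ (k+3) := by
    intro k
    induction k with
    | zero =>
      have h1 : y * x ^ (0+1) - (x ^ (0+1) * y - (((0+1 : ℕ) : F) * α) • x ^ (0+2)) =
          -(x * y - (y * x + α • (x * x))) := by
        simp only [zero_add, pow_one, Nat.cast_one, one_mul, pow_two]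
        abel
      rw [h1]
      exact neg_mem hxy
    | succ k ih =>
      rw [show k+2 = (k+1)+1 by omega, pow_succ x (k+1)] at ih
      have hdeq : y * x^(k+1) = x^(k+1)*y - (((k+1 : ℕ) : F)*α) • (x^(k+1)*x) +
          (y * x^(k+1) - (x^(k+1)*y - (((k+1 : ℕ) : F)*α) • (x^(k+1)*x))) := by abel
      have hcoeff : ((k+1+1 : ℕ) : F) * α = ((k+1 : ℕ) : F)*α + α := by push_cast; ring
      have hp1 : x ^ (k+1+1) = x^(k+1) * x := pow_succ x (k+1)
      have hp2 : x ^ (k+1+2) = (x^(k+1)*x)*x := by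
        rw [pow_add x (k+1) 2, pow_two, mul_assoc]
      rw [hp1, hp2, hcoeff,
        id_succ x y (x^(k+1)) _ _ (((k+1 : ℕ) : F)*α) α hdeq rfl]
      refine sub_mem ?_ ?_
      · rw [show k+1+3 = (k+3)+1 by omega, pow_succ (jrad F A) (k+3)]
        exact Submodule.mul_mem_mul ih hx
      · rw [pow_add (jrad F A) (k+1) 3]
        exact Submodule.mul_mem_mul (Submodule.pow_mem_pow _ hx _) hxy
  have hA : ∀ m : ℕ, 1 ≤ m →
      x ^ (m + 1) - α⁻¹ • (x * (x ^ (m - 1) * y) - (x ^ (m - 1) * y) * x)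
        ∈ jrad F A ^ (m + 2) := by
    intro m hm
    obtain ⟨k, rfl⟩ : ∃ k, m = k + 1 := ⟨m - 1, by omega⟩
    simp only [Nat.add_sub_cancel]
    have hcomm : x * x ^ k = x ^ k * x := by rw [← pow_succ', pow_succ]
    have hp1 : x ^ (k+1+1) = (x^k * x) * x := by rw [pow_succ, pow_succ]
    rw [hp1, id_a x y (x^k) α hα hcomm]
    refine neg_mem (Submodule.smul_mem _ _ ?_)
    rw [show k+1+2 = k+3 by omega, pow_add]
    exact Submodule.mul_mem_mul (Submodule.pow_mem_pow _ hx _) hxy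
  have hB : ∀ m : ℕ, 1 ≤ m →
      x ^ (2 * m) * y - α⁻¹ • (y * (x ^ (2 * m - 1) * y) - (x ^ (2 * m - 1) * y) * y)
        ∈ jrad F A ^ (2 * m + 2) := by
    intro m hm
    obtain ⟨k, rfl⟩ : ∃ k, m = k + 1 := ⟨m - 1, by omega⟩
    rw [show 2*(k+1) - 1 = 2*k+1 by omega, show 2*(k+1)+2 = (2*k+1)+3 by omega,
      show 2*(k+1) = (2*k+1)+1 by omega]
    have hcp := comm_pow (2*k)
    have hcast : ((2*k+1 : ℕ) : F) = 1 := by push_cast; rw [h2]; ring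
    rw [hcast, one_mul, show 2*k+2 = (2*k+1)+1 by omega, pow_succ x (2*k+1)] at hcp
    have hdeq : y * x^(2*k+1) = x^(2*k+1)*y - α • (x^(2*k+1)*x) +
        (y * x^(2*k+1) - (x^(2*k+1)*y - α • (x^(2*k+1)*x))) := by abel
    have hcoeff : (1 + α⁻¹ * α : F) = 0 := by
      rw [inv_mul_cancel₀ hα, ← h2]; norm_num
    rw [pow_succ x (2*k+1), id_b x y (x^(2*k+1)) _ α α hdeq, hcoeff, zero_smul, zero_sub]
    refine neg_mem (Submodule.smul_mem _ _ ?_)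
    rw [show (2*k+1)+3 = (2*k+3)+1 by omega, pow_succ (jrad F A) (2*k+3)]
    exact Submodule.mul_mem_mul hcp hy
  refine ⟨fun m hm => ⟨hA m hm, hB m hm⟩, fun n hn => ?_⟩
  obtain ⟨k, rfl⟩ : ∃ k, n = k + 2 := ⟨n - 2, by omega⟩
  have h := hA (k+1) (by omega)
  simp only [Nat.add_sub_cancel] at h
  rw [show k+1+1 = k+2 by omega, show k+1+2 = k+2+1 by omega] at h
  set C : A := x * (x ^ k * y) - (x ^ k * y) * x with hC
  have hC1 : α⁻¹ • C ∈ commSpan F A :=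
    Submodule.smul_mem _ _ (Submodule.subset_span ⟨x, x ^ k * y, rfl⟩)
  have hfin : x ^ (k+2) = α⁻¹ • C + (x ^ (k+2) - α⁻¹ • C) := by abel
  rw [hfin]
  exact Submodule.add_mem_sup hC1 h
end
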